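/- Let I : (0,1) → (0,1) be quasiconcave and satisfy condition (★), and let ‖·‖_X be an r.i. norm with associate norm ‖·‖_{X'}. Then there exist c₁, c₂ > 0 such that for every f ∈ M_+(0,1): c₁·‖R_I f^*‖_{X'} ≤ ‖S_I(R_I f^*)‖_{X'} ≤ c₂·‖R_I f^*‖_{X'}, where (R_I f^*)(t) = (1/I(t))∫_0^t f^*(s) ds. (Equivalently: setting ‖g‖_Z = ‖S_I g‖_{X'}, the associate optimal target norm ‖f‖_{Y_X'} = ‖R_I f^*‖_{X'} satisfies ‖f‖_{Y_X'} ≈ ‖R_I f^*‖_Z, and S_I is bounded on Z.) -/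

import Mathlib

open MeasureTheory Set Filter
open scoped ENNReal

noncomputable section

/-- The nonincreasing rearrangement of `f` over `(0,1)`. -/
def rearr (f : ℝ → ℝ≥0∞) (t : ℝ) : ℝ≥0∞ :=
  sInf {l : ℝ≥0∞ | volume {s ∈ Set.Ioo (0:ℝ) 1 | l < f s} ≤ ENNReal.ofReal t}

/-- The maximal nonincreasing rearrangement `f^{**}(t) = (1/t) ∫_0^t f^*(s) ds`. -/
def dstar (f : ℝ → ℝ≥0∞) (t : ℝ) : ℝ≥0∞ :=
  (ENNReal.ofReal t)⁻¹ * ∫⁻ s in Set.Ioo (0:ℝ) t, rearr f s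

/-- The `L¹(0,1)` norm. -/
def lOne (f : ℝ → ℝ≥0∞) : ℝ≥0∞ := ∫⁻ t in Set.Ioo (0:ℝ) 1, f t

/-- The norm of the Marcinkiewicz-type space `m_I`. -/
def mNorm (I : ℝ → ℝ) (f : ℝ → ℝ≥0∞) : ℝ≥0∞ :=
  ⨆ t ∈ Set.Ioo (0:ℝ) 1, ENNReal.ofReal (I t) * rearr f t

/-- The norm of `m_Ĩ` where `Ĩ(t) = t / I(t)`. -/
def mNormTilde (I : ℝ → ℝ) (f : ℝ → ℝ≥0∞) : ℝ≥0∞ :=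
  ⨆ t ∈ Set.Ioo (0:ℝ) 1, ENNReal.ofReal (t / I t) * rearr f t

/-- The supremum operator `S_I f(t) = (1/I(t)) sup_{0<s≤t} I(s) f^*(s)`. -/
def SI (I : ℝ → ℝ) (f : ℝ → ℝ≥0∞) : ℝ → ℝ≥0∞ := fun t =>
  (ENNReal.ofReal (I t))⁻¹ * ⨆ s ∈ Set.Ioc (0:ℝ) t, ENNReal.ofReal (I s) * rearr f s

/-- The supremum operator `T_I f(t) = (I(t)/t) sup_{t≤s<1} (s/I(s)) f^*(s)`. -/
def TI (I : ℝ → ℝ) (f : ℝ → ℝ≥0∞) : ℝ → ℝ≥0∞ := fun t =>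
  ENNReal.ofReal (I t / t) * ⨆ s ∈ Set.Ico t 1, ENNReal.ofReal (s / I s) * rearr f s

/-- `H_I f(t) = ∫_t^1 f(s)/I(s) ds`. -/
def HI (I : ℝ → ℝ) (f : ℝ → ℝ≥0∞) : ℝ → ℝ≥0∞ := fun t =>
  ∫⁻ s in Set.Ioo t 1, f s / ENNReal.ofReal (I s)

/-- `R_I f(t) = (1/I(t)) ∫_0^t f(s) ds`. -/
def RI (I : ℝ → ℝ) (f : ℝ → ℝ≥0∞) : ℝ → ℝ≥0∞ := fun t =>
  (ENNReal.ofReal (I t))⁻¹ * ∫⁻ s in Set.Ioo (0:ℝ) t, f s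

/-- `I : (0,1) → (0,1)` is quasiconcave: a nondecreasing bijection of `(0,1)` onto `(0,1)`
with `I(t)/t` nonincreasing, `I(0+) = 0` and `I(1-) = 1`. -/
def Quasiconcave (I : ℝ → ℝ) : Prop :=
  Set.BijOn I (Set.Ioo 0 1) (Set.Ioo 0 1) ∧
  MonotoneOn I (Set.Ioo 0 1) ∧
  AntitoneOn (fun t => I t / t) (Set.Ioo 0 1) ∧
  Tendsto I (nhdsWithin 0 (Set.Ioo 0 1)) (nhds 0) ∧
  Tendsto I (nhdsWithin 1 (Set.Ioo 0 1)) (nhds 1)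

/-- Condition (★): `∫_0^t I(s)/s ds ≲ I(t)`. -/
def StarCond (I : ℝ → ℝ) : Prop :=
  ∃ C : ℝ, 0 < C ∧ ∀ t ∈ Set.Ioo (0:ℝ) 1,
    ∫⁻ s in Set.Ioo (0:ℝ) t, ENNReal.ofReal (I s / s) ≤ ENNReal.ofReal (C * I t)

/-- The average property: `∫_0^t ds/I(s) ≲ t/I(t)`. -/
def AvgProp (I : ℝ → ℝ) : Prop :=
  ∃ C : ℝ, 0 < C ∧ ∀ t ∈ Set.Ioo (0:ℝ) 1,
    ∫⁻ s in Set.Ioo (0:ℝ) t, ENNReal.ofReal (1 / I s) ≤ ENNReal.ofReal (C * (t / I t))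

/-- The condition `∫_t^1 I(s)/s² ds ≲ (1/t) ∫_0^t I(s)/s ds`. -/
def MaxCond (I : ℝ → ℝ) : Prop :=
  ∃ C : ℝ, 0 < C ∧ ∀ t ∈ Set.Ioo (0:ℝ) 1,
    ∫⁻ s in Set.Ioo t 1, ENNReal.ofReal (I s / s ^ 2) ≤
      ENNReal.ofReal (C / t) * ∫⁻ s in Set.Ioo (0:ℝ) t, ENNReal.ofReal (I s / s)

/-- The class `𝒬` of quasiconcave functions. -/
def ClassQ (I : ℝ → ℝ) : Prop :=
  Quasiconcave I ∧ StarCond I ∧ AvgProp I ∧ MaxCond I ∧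
  ∃ c d : ℝ,
    IsLUB {l : ℝ | 0 ≤ l ∧ ∀ t ∈ Set.Ioo (0:ℝ) 1,
      ENNReal.ofReal (l * (I t / t ^ 2 - 1)) ≤
        ∫⁻ s in Set.Ioo t 1, ENNReal.ofReal (I s / s ^ 3)} c ∧
    IsLeast {e : ℝ | 0 < e ∧ ∀ t ∈ Set.Ioo (0:ℝ) 1,
      ∫⁻ s in Set.Ioo t 1, ENNReal.ofReal (I s / s ^ 2) ≤
        ENNReal.ofReal (e * (I t / t))} d ∧
    (1 - c) * d ≤ c

/-- The `Δ₂` condition: `I(2t) ≤ C I(t)` for `t ∈ (0,1/2)`. -/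
def Delta2 (I : ℝ → ℝ) : Prop :=
  ∃ C : ℝ, 0 < C ∧ ∀ t ∈ Set.Ioo (0:ℝ) (1/2), I (2 * t) ≤ C * I t

/-- A rearrangement-invariant Banach function norm on `M₊(0,1)`. -/
def IsRiNorm (ρ : (ℝ → ℝ≥0∞) → ℝ≥0∞) : Prop :=
  (∀ f : ℝ → ℝ≥0∞, Measurable f →
      (ρ f = 0 ↔ f =ᵐ[volume.restrict (Set.Ioo (0:ℝ) 1)] 0)) ∧
  (∀ f : ℝ → ℝ≥0∞, Measurable f → ∀ a : ℝ, 0 ≤ a →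
      ρ (fun t => ENNReal.ofReal a * f t) = ENNReal.ofReal a * ρ f) ∧
  (∀ f g : ℝ → ℝ≥0∞, Measurable f → Measurable g →
      ρ (fun t => f t + g t) ≤ ρ f + ρ g) ∧
  (∀ f g : ℝ → ℝ≥0∞, Measurable f → Measurable g →
      (∀ᵐ t ∂(volume.restrict (Set.Ioo (0:ℝ) 1)), f t ≤ g t) → ρ f ≤ ρ g) ∧
  (∀ (fn : ℕ → ℝ → ℝ≥0∞) (f : ℝ → ℝ≥0∞), (∀ n, Measurable (fn n)) → Measurable f →
      (∀ᵐ t ∂(volume.restrict (Set.Ioo (0:ℝ) 1)), Monotone (fun n => fn n t)) →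
      (∀ᵐ t ∂(volume.restrict (Set.Ioo (0:ℝ) 1)), (⨆ n, fn n t) = f t) →
      (⨆ n, ρ (fn n)) = ρ f) ∧
  (ρ (fun _ => 1) < ⊤) ∧
  (∃ c : ℝ, 0 < c ∧ ∀ f : ℝ → ℝ≥0∞, Measurable f →
      ∫⁻ t in Set.Ioo (0:ℝ) 1, f t ≤ ENNReal.ofReal c * ρ f) ∧
  (∀ f : ℝ → ℝ≥0∞, Measurable f → ρ f = ρ (rearr f))

/-- The associate norm `ρ'`. -/
def assoc (ρ : (ℝ → ℝ≥0∞) → ℝ≥0∞) (f : ℝ → ℝ≥0∞) : ℝ≥0∞ :=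
  ⨆ (g : ℝ → ℝ≥0∞) (_ : Measurable g ∧ ρ g ≤ 1),
    ∫⁻ t in Set.Ioo (0:ℝ) 1, f t * g t

/-- The optimal target norm `‖f‖_{Y_X}` of the r.i. norm `ρ = ‖·‖_X` under `H_I`. -/
def optTargetNorm (I : ℝ → ℝ) (ρ : (ℝ → ℝ≥0∞) → ℝ≥0∞) (f : ℝ → ℝ≥0∞) : ℝ≥0∞ :=
  ⨆ (g : ℝ → ℝ≥0∞) (_ : Measurable g ∧ assoc ρ (RI I (rearr g)) ≤ 1),
    ∫⁻ t in Set.Ioo (0:ℝ) 1, rearr f t * rearr g t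

/-- The optimal domain norm `‖f‖_{X_Y} = sup_{h ∼ f} ‖H_I h‖_Y`. -/
def optDomainNorm (I : ℝ → ℝ) (ρY : (ℝ → ℝ≥0∞) → ℝ≥0∞) (f : ℝ → ℝ≥0∞) : ℝ≥0∞ :=
  ⨆ (h : ℝ → ℝ≥0∞)
    (_ : Measurable h ∧ ∀ t ∈ Set.Ioo (0:ℝ) 1, rearr h t = rearr f t),
      ρY (HI I h)

/-- `H_I : X → Y` boundedly. -/
def HIBounded (I : ℝ → ℝ) (ρX ρY : (ℝ → ℝ≥0∞) → ℝ≥0∞) : Prop :=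
  ∃ C : ℝ, 0 < C ∧ ∀ f : ℝ → ℝ≥0∞, Measurable f →
    ρY (HI I f) ≤ ENNReal.ofReal C * ρX f

/-- `X` is the optimal domain space for `Y` under `H_I`. -/
def IsOptimalDomain (I : ℝ → ℝ) (ρX ρY : (ℝ → ℝ≥0∞) → ℝ≥0∞) : Prop :=
  HIBounded I ρX ρY ∧
  ∀ ρZ : (ℝ → ℝ≥0∞) → ℝ≥0∞, IsRiNorm ρZ → HIBounded I ρZ ρY →
    ∃ C : ℝ, 0 < C ∧ ∀ f : ℝ → ℝ≥0∞, Measurable f →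
      ρX f ≤ ENNReal.ofReal C * ρZ f

/-- `Y` is the optimal target space for `X` under `H_I`. -/
def IsOptimalTarget (I : ℝ → ℝ) (ρX ρY : (ℝ → ℝ≥0∞) → ℝ≥0∞) : Prop :=
  HIBounded I ρX ρY ∧
  ∀ ρZ : (ℝ → ℝ≥0∞) → ℝ≥0∞, IsRiNorm ρZ → HIBounded I ρX ρZ →
    ∃ C : ℝ, 0 < C ∧ ∀ f : ℝ → ℝ≥0∞, Measurable f →
      ρZ f ≤ ENNReal.ofReal C * ρY f

namespace S14


/-- distribution function over (0,1) -/
def dd (u : ℝ → ℝ≥0∞) (l : ℝ≥0∞) : ℝ≥0∞ := volume {s ∈ Set.Ioo (0:ℝ) 1 | l < u s}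

lemma rearr_eq (u : ℝ → ℝ≥0∞) (t : ℝ) :
    rearr u t = sInf {l | dd u l ≤ ENNReal.ofReal t} := rfl

lemma dd_anti (u : ℝ → ℝ≥0∞) {l l' : ℝ≥0∞} (h : l ≤ l') : dd u l' ≤ dd u l := by
  apply measure_mono; intro x hx; exact ⟨hx.1, lt_of_le_of_lt h hx.2⟩

lemma dd_le_one (u : ℝ → ℝ≥0∞) (l : ℝ≥0∞) : dd u l ≤ 1 := by
  calc dd u l ≤ volume (Set.Ioo (0:ℝ) 1) := measure_mono (fun x hx => hx.1)
  _ = 1 := by simp [Real.volume_Ioo]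

lemma dd_ne_top (u : ℝ → ℝ≥0∞) (l : ℝ≥0∞) : dd u l ≠ ⊤ :=
  ne_top_of_le_ne_top (by norm_num) (dd_le_one u l)

lemma rearr_le {u : ℝ → ℝ≥0∞} {l : ℝ≥0∞} {t : ℝ} (h : dd u l ≤ ENNReal.ofReal t) :
    rearr u t ≤ l := sInf_le h

lemma le_rearr {u : ℝ → ℝ≥0∞} {c : ℝ≥0∞} {t : ℝ}
    (h : ∀ l, dd u l ≤ ENNReal.ofReal t → c ≤ l) : c ≤ rearr u t := le_sInf h

lemma le_rearr_of_lt {u : ℝ → ℝ≥0∞} {l : ℝ≥0∞} {s : ℝ}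
    (h : ENNReal.ofReal s < dd u l) : l ≤ rearr u s := by
  apply le_rearr
  intro l' hl'
  by_contra hc
  push_neg at hc
  exact absurd (le_trans (dd_anti u hc.le) hl') (not_le.mpr h)

lemma rearr_anti (u : ℝ → ℝ≥0∞) : Antitone (rearr u) := by
  intro t t' h
  rw [rearr_eq, rearr_eq]
  exact le_sInf (fun l hl => sInf_le (le_trans hl (ENNReal.ofReal_le_ofReal h)))

lemma rearr_measurable (u : ℝ → ℝ≥0∞) : Measurable (rearr u) :=
  (rearr_anti u).measurable

/-- if u ≤ c on [s,1)∩(0,1) then rearr u s ≤ c -/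
lemma rearr_le_of_bound {u : ℝ → ℝ≥0∞} {c : ℝ≥0∞} {s : ℝ} (hs : 0 < s)
    (h : ∀ x ∈ Set.Ioo (0:ℝ) 1, s ≤ x → u x ≤ c) : rearr u s ≤ c := by
  apply rearr_le
  have hsub : {x ∈ Set.Ioo (0:ℝ) 1 | c < u x} ⊆ Set.Ioo 0 s := by
    intro x hx
    rcases hx with ⟨hx1, hx2⟩
    refine ⟨hx1.1, ?_⟩
    by_contra hc
    push_neg at hc
    exact absurd (h x hx1 hc) (not_le.mpr hx2)
  calc dd u c ≤ volume (Set.Ioo 0 s) := measure_mono hsub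
  _ = ENNReal.ofReal s := by rw [Real.volume_Ioo]; simp

lemma rearr_mono_dd {u w : ℝ → ℝ≥0∞} (h : ∀ l, dd u l ≤ dd w l) :
    ∀ t, rearr u t ≤ rearr w t := by
  intro t
  rw [rearr_eq, rearr_eq]
  exact le_sInf (fun l hl => sInf_le (le_trans (h l) hl))

lemma dd_congr {u w : ℝ → ℝ≥0∞} (h : ∀ x ∈ Set.Ioo (0:ℝ) 1, u x = w x) :
    ∀ l, dd u l = dd w l := by
  intro l
  unfold dd
  congr 1
  ext x
  exact and_congr_right (fun hx => by rw [h x hx])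

lemma rearr_congr {u w : ℝ → ℝ≥0∞} (h : ∀ x ∈ Set.Ioo (0:ℝ) 1, u x = w x) :
    rearr u = rearr w := by
  funext t
  exact le_antisymm (rearr_mono_dd (fun l => (dd_congr h l).le) t)
    (rearr_mono_dd (fun l => (dd_congr h l).ge) t)

lemma rearr_mono {u w : ℝ → ℝ≥0∞} (h : ∀ x ∈ Set.Ioo (0:ℝ) 1, u x ≤ w x) :
    ∀ t, rearr u t ≤ rearr w t := by
  apply rearr_mono_dd
  intro l
  apply measure_mono
  intro x hx
  exact ⟨hx.1, lt_of_lt_of_le hx.2 (h x hx.1)⟩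

/-- the set where rearr u exceeds l, intersected with (0,c), has measure ≤ min(c, dd u l) -/
lemma dd_rearr_le {u : ℝ → ℝ≥0∞} {l : ℝ≥0∞} {c : ℝ} (hc : 0 ≤ c) :
    volume {s ∈ Set.Ioo (0:ℝ) c | l < rearr u s} ≤ min (ENNReal.ofReal c) (dd u l) := by
  have hsub : {s ∈ Set.Ioo (0:ℝ) c | l < rearr u s} ⊆
      Set.Ioo 0 (min c (dd u l).toReal) := by
    intro s hs
    rcases hs with ⟨hs1, hs2⟩
    refine ⟨hs1.1, lt_min hs1.2 ?_⟩
    by_contra hge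
    push_neg at hge
    have : dd u l ≤ ENNReal.ofReal s := by
      rw [← ENNReal.ofReal_toReal (dd_ne_top u l)]
      exact ENNReal.ofReal_le_ofReal hge
    exact absurd (rearr_le this) (not_le.mpr hs2)
  calc volume {s ∈ Set.Ioo (0:ℝ) c | l < rearr u s}
      ≤ volume (Set.Ioo 0 (min c (dd u l).toReal)) := measure_mono hsub
  _ = ENNReal.ofReal (min c (dd u l).toReal) := by rw [Real.volume_Ioo]; simp
  _ ≤ min (ENNReal.ofReal c) (dd u l) := by
      apply le_min
      · exact ENNReal.ofReal_le_ofReal (min_le_left _ _)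
      · exact le_trans (ENNReal.ofReal_le_ofReal (min_le_right _ _)) ENNReal.ofReal_toReal_le

/-- right continuity of distribution along rationals -/
lemma dd_sup_rat (u : ℝ → ℝ≥0∞) {l : ℝ} (hl : 0 ≤ l) :
    dd u (ENNReal.ofReal l) = ⨆ (q : {q : ℚ // l < (q:ℝ)}), dd u (ENNReal.ofReal q) := by
  have hU : {s ∈ Set.Ioo (0:ℝ) 1 | ENNReal.ofReal l < u s} =
      ⋃ (q : {q : ℚ // l < (q:ℝ)}), {s ∈ Set.Ioo (0:ℝ) 1 | ENNReal.ofReal (q:ℝ) < u s} := by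
    ext s
    simp only [Set.mem_iUnion, Set.mem_setOf_eq]
    constructor
    · rintro ⟨hs, hlt⟩
      by_cases htop : u s = ⊤
      · obtain ⟨q, hq⟩ := exists_rat_gt l
        exact ⟨⟨q, hq⟩, hs, by rw [htop]; exact ENNReal.ofReal_lt_top⟩
      · have h1 : l < (u s).toReal := by
          rw [← ENNReal.ofReal_lt_iff_lt_toReal hl htop]; exact hlt
        obtain ⟨q, hq1, hq2⟩ := exists_rat_btwn h1
        refine ⟨⟨q, hq1⟩, hs, ?_⟩
        rw [ENNReal.ofReal_lt_iff_lt_toReal (le_trans hl hq1.le) htop]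
        exact hq2
    · rintro ⟨q, hs, hlt⟩
      exact ⟨hs, lt_of_le_of_lt (ENNReal.ofReal_le_ofReal q.2.le) hlt⟩
  unfold dd
  rw [hU]
  apply Directed.measure_iUnion
  intro q₁ q₂
  refine ⟨⟨min q₁.1 q₂.1, by push_cast; exact lt_min (by exact_mod_cast q₁.2) (by exact_mod_cast q₂.2)⟩, ?_, ?_⟩ <;>
  · intro s hs
    refine ⟨hs.1, lt_of_le_of_lt (ENNReal.ofReal_le_ofReal ?_) hs.2⟩
    push_cast
    simp [min_le_left, min_le_right]



lemma vol_enn (c : ℝ≥0∞) :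
    volume {l : ℝ | l ∈ Set.Ioi (0:ℝ) ∧ ENNReal.ofReal l < c} = c := by
  by_cases hc : c = ⊤
  · subst hc
    have : {l : ℝ | l ∈ Set.Ioi (0:ℝ) ∧ ENNReal.ofReal l < ⊤} = Set.Ioi 0 := by
      ext l; simp [ENNReal.ofReal_lt_top]
    rw [this]; simp [Real.volume_Ioi]
  · have : {l : ℝ | l ∈ Set.Ioi (0:ℝ) ∧ ENNReal.ofReal l < c} = Set.Ioo 0 c.toReal := by
      ext l
      simp only [Set.mem_setOf_eq, Set.mem_Ioi, Set.mem_Ioo]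
      exact ⟨fun ⟨h1, h2⟩ => ⟨h1, (ENNReal.ofReal_lt_iff_lt_toReal h1.le hc).mp h2⟩,
        fun ⟨h1, h2⟩ => ⟨h1, (ENNReal.ofReal_lt_iff_lt_toReal h1.le hc).mpr h2⟩⟩
    rw [this, Real.volume_Ioo, sub_zero, ENNReal.ofReal_toReal hc]

/-- Layer cake: ∫_A u·w = ∫_{l>0} ∫_{A ∩ {w > l}} u. -/
lemma layercake {u w : ℝ → ℝ≥0∞} (hu : Measurable u) (hw : Measurable w)
    {A : Set ℝ} (hA : MeasurableSet A) :
    ∫⁻ x in A, u x * w x =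
      ∫⁻ l in Set.Ioi (0:ℝ), ∫⁻ x in A ∩ {x | ENNReal.ofReal l < w x}, u x := by
  have hker : Measurable (Function.uncurry (fun (l x : ℝ) =>
      (if ENNReal.ofReal l < w x then u x else 0))) := by
    apply Measurable.ite _ (hu.comp measurable_snd) measurable_const
    exact measurableSet_lt (ENNReal.measurable_ofReal.comp measurable_fst)
      (hw.comp measurable_snd)
  have hswap := lintegral_lintegral_swap
    (μ := volume.restrict (Set.Ioi (0:ℝ))) (ν := volume.restrict A)
    (f := fun l x => if ENNReal.ofReal l < w x then u x else 0) hker.aemeasurable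
  have hL : ∀ l : ℝ, (∫⁻ x in A, (if ENNReal.ofReal l < w x then u x else 0)) =
      ∫⁻ x in A ∩ {x | ENNReal.ofReal l < w x}, u x := by
    intro l
    have h1 : (fun x => if ENNReal.ofReal l < w x then u x else 0) =
        ({x | ENNReal.ofReal l < w x}).indicator u := by
      funext x; simp [Set.indicator_apply]
    have hms : MeasurableSet {x | ENNReal.ofReal l < w x} :=
      measurableSet_lt measurable_const hw
    rw [h1, lintegral_indicator hms, Measure.restrict_restrict hms, Set.inter_comm]
  have hR : ∀ x : ℝ, (∫⁻ l in Set.Ioi (0:ℝ),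
      (if ENNReal.ofReal l < w x then u x else 0)) = u x * w x := by
    intro x
    have h1 : (fun l : ℝ => if ENNReal.ofReal l < w x then u x else 0) =
        ({l : ℝ | ENNReal.ofReal l < w x}).indicator (fun _ => u x) := by
      funext l; simp [Set.indicator_apply]
    have hms : MeasurableSet {l : ℝ | ENNReal.ofReal l < w x} :=
      measurableSet_lt ENNReal.measurable_ofReal measurable_const
    rw [h1, lintegral_indicator hms, Measure.restrict_restrict hms, setLIntegral_const]
    rw [show {l : ℝ | ENNReal.ofReal l < w x} ∩ Set.Ioi 0
        = {l : ℝ | l ∈ Set.Ioi (0:ℝ) ∧ ENNReal.ofReal l < w x} by ext l; exact and_comm]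
    rw [vol_enn]
  calc ∫⁻ x in A, u x * w x = ∫⁻ x in A, ∫⁻ l in Set.Ioi (0:ℝ),
        (if ENNReal.ofReal l < w x then u x else 0) := by
        refine lintegral_congr (fun x => ?_); rw [hR x]
  _ = ∫⁻ l in Set.Ioi (0:ℝ), ∫⁻ x in A,
        (if ENNReal.ofReal l < w x then u x else 0) := hswap.symm
  _ = _ := lintegral_congr (fun l => hL l)




/-- the functional W u r = ∫_{(0,min(r,1))} rearr u -/
def WW (u : ℝ → ℝ≥0∞) (r : ℝ≥0∞) : ℝ≥0∞ :=
  ∫⁻ s in Set.Ioo (0:ℝ) 1, (if ENNReal.ofReal s < r then rearr u s else 0)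

lemma WW_mono (u : ℝ → ℝ≥0∞) : Monotone (WW u) := by
  intro r r' h
  apply lintegral_mono
  intro s
  dsimp only
  by_cases hs : ENNReal.ofReal s < r
  · rw [if_pos hs, if_pos (lt_of_lt_of_le hs h)]
  · rw [if_neg hs]; exact zero_le

lemma min_iSup {ι : Sort*} (r : ℝ≥0∞) (f : ι → ℝ≥0∞) :
    min r (⨆ i, f i) = ⨆ i, min r (f i) := by
  by_cases hex : ∃ i, r ≤ f i
  · obtain ⟨i, hi⟩ := hex
    apply le_antisymm
    · calc min r (⨆ i, f i) ≤ r := min_le_left _ _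
        _ = min r (f i) := (min_eq_left hi).symm
        _ ≤ ⨆ i, min r (f i) := le_iSup (fun i => min r (f i)) i
    · exact iSup_le fun j => min_le_min le_rfl (le_iSup f j)
  · push_neg at hex
    have h1 : (⨆ i, f i) ≤ r := iSup_le fun i => (hex i).le
    rw [min_eq_right h1]
    exact le_antisymm (iSup_mono (fun i => (min_eq_right (hex i).le).ge))
      (iSup_le fun i => le_trans (min_le_right _ _) (le_iSup f i))

lemma WW_eq {u : ℝ → ℝ≥0∞} {r : ℝ≥0∞} (hr : r ≤ 1) :
    WW u r = ∫⁻ s in Set.Ioo (0:ℝ) (r.toReal), rearr u s := by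
  have hrt : r ≠ ⊤ := ne_top_of_le_ne_top (by norm_num) hr
  have hr1 : r.toReal ≤ 1 := by
    calc r.toReal ≤ (1:ℝ≥0∞).toReal := ENNReal.toReal_mono (by norm_num) hr
    _ = 1 := by simp
  have h1 : (fun s => if ENNReal.ofReal s < r then rearr u s else 0) =
      ({s : ℝ | ENNReal.ofReal s < r}).indicator (rearr u) := by
    funext s; simp [Set.indicator_apply]
  have hms : MeasurableSet {s : ℝ | ENNReal.ofReal s < r} :=
    measurableSet_lt ENNReal.measurable_ofReal measurable_const
  unfold WW
  rw [h1, lintegral_indicator hms, Measure.restrict_restrict hms]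
  congr 1
  rw [show {s : ℝ | ENNReal.ofReal s < r} ∩ Set.Ioo 0 1 = Set.Ioo 0 r.toReal by
    ext s
    simp only [Set.mem_inter_iff, Set.mem_setOf_eq, Set.mem_Ioo]
    constructor
    · rintro ⟨h1, h2, h3⟩
      exact ⟨h2, (ENNReal.ofReal_lt_iff_lt_toReal h2.le hrt).mp h1⟩
    · rintro ⟨h2, h3⟩
      exact ⟨(ENNReal.ofReal_lt_iff_lt_toReal h2.le hrt).mpr h3, h2, lt_of_lt_of_le h3 hr1⟩]

lemma WW_dd_sup (u w : ℝ → ℝ≥0∞) {l : ℝ} (hl : 0 ≤ l) :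
    WW u (dd w (ENNReal.ofReal l)) =
      ⨆ (q : {q : ℚ // l < (q:ℝ)}), WW u (dd w (ENNReal.ofReal (q:ℝ))) := by
  have hdd := dd_sup_rat w hl
  have hpt : (fun s => if ENNReal.ofReal s < dd w (ENNReal.ofReal l) then rearr u s else 0) =
      (fun s => ⨆ (q : {q : ℚ // l < (q:ℝ)}),
        if ENNReal.ofReal s < dd w (ENNReal.ofReal (q:ℝ)) then rearr u s else 0) := by
    funext s
    by_cases hs : ENNReal.ofReal s < dd w (ENNReal.ofReal l)
    · rw [if_pos hs]
      rw [hdd] at hs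
      obtain ⟨q, hq⟩ := lt_iSup_iff.mp hs
      apply le_antisymm
      · exact le_iSup_of_le q (by rw [if_pos hq])
      · exact iSup_le fun j => by
          by_cases hj : ENNReal.ofReal s < dd w (ENNReal.ofReal (j:ℝ))
          · rw [if_pos hj]
          · rw [if_neg hj]; exact zero_le
    · rw [if_neg hs]
      symm
      rw [ENNReal.iSup_eq_zero]
      intro q
      rw [if_neg]
      intro hq
      exact hs (lt_of_lt_of_le hq (dd_anti w (ENNReal.ofReal_le_ofReal q.2.le)))
  unfold WW
  rw [hpt]
  rw [lintegral_iSup_directed]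
  · intro q
    apply Measurable.aemeasurable
    exact Measurable.ite (measurableSet_lt ENNReal.measurable_ofReal measurable_const)
      (rearr_measurable u) measurable_const
  · intro q₁ q₂
    have key : ∀ (a b : ℝ), b ≤ a →
        (fun s => if ENNReal.ofReal s < dd w (ENNReal.ofReal a) then rearr u s else 0) ≤
        (fun s => if ENNReal.ofReal s < dd w (ENNReal.ofReal b) then rearr u s else 0) := by
      intro a b hba s
      dsimp only
      by_cases h1 : ENNReal.ofReal s < dd w (ENNReal.ofReal a)
      · rw [if_pos h1,
          if_pos (lt_of_lt_of_le h1 (dd_anti w (ENNReal.ofReal_le_ofReal hba)))]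
      · rw [if_neg h1]; exact zero_le
    refine ⟨⟨min q₁.1 q₂.1, by push_cast; exact lt_min q₁.2 q₂.2⟩, ?_, ?_⟩
    · exact key _ _ (by push_cast; exact min_le_left _ _)
    · exact key _ _ (by push_cast; exact min_le_right _ _)




lemma ofReal_lt_of_lt_toReal {r : ℝ≥0∞} {s : ℝ} (hs : 0 ≤ s) (hrt : r ≠ ⊤)
    (h : s < r.toReal) : ENNReal.ofReal s < r :=
  (ENNReal.ofReal_lt_iff_lt_toReal hs hrt).mpr h

/-- the key "attained over an interval of same measure" bound:
∫_E u ≤ W u (vol E) for E ⊆ (0,1). -/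
lemma setLIntegral_le_WW {u : ℝ → ℝ≥0∞} (hu : Measurable u) {E : Set ℝ}
    (hE : MeasurableSet E) (hEΩ : E ⊆ Set.Ioo 0 1) :
    ∫⁻ x in E, u x ≤ WW u (volume E) := by
  have hvolE : volume E ≤ 1 := by
    calc volume E ≤ volume (Set.Ioo (0:ℝ) 1) := measure_mono hEΩ
    _ = 1 := by simp [Real.volume_Ioo]
  have hvolEt : volume E ≠ ⊤ := ne_top_of_le_ne_top (by norm_num) hvolE
  -- LHS layer cake
  have h1 : ∫⁻ x in E, u x
      = ∫⁻ l in Set.Ioi (0:ℝ), volume (E ∩ {x | ENNReal.ofReal l < u x}) := by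
    have hlc := layercake (u := fun _ => (1:ℝ≥0∞)) (w := u) measurable_const hu hE
    simp only [one_mul] at hlc
    rw [hlc]
    exact lintegral_congr fun l => setLIntegral_one _
  -- RHS layer cake
  have h2 : WW u (volume E) = ∫⁻ l in Set.Ioi (0:ℝ),
      volume ((Set.Ioo (0:ℝ) 1 ∩ {x | ENNReal.ofReal l < rearr u x})
        ∩ {s : ℝ | ENNReal.ofReal s < volume E}) := by
    have hι : Measurable (fun s : ℝ => if ENNReal.ofReal s < volume E then (1:ℝ≥0∞) else 0) :=
      Measurable.ite (measurableSet_lt ENNReal.measurable_ofReal measurable_const)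
        measurable_const measurable_const
    have hlc := layercake (u := fun s : ℝ => if ENNReal.ofReal s < volume E then (1:ℝ≥0∞) else 0)
      (w := rearr u) hι (rearr_measurable u) (measurableSet_Ioo (a := (0:ℝ)) (b := (1:ℝ)))
    have hWW : WW u (volume E) = ∫⁻ s in Set.Ioo (0:ℝ) 1,
        (if ENNReal.ofReal s < volume E then (1:ℝ≥0∞) else 0) * rearr u s := by
      unfold WW
      apply lintegral_congr
      intro s
      by_cases hs : ENNReal.ofReal s < volume E
      · rw [if_pos hs, if_pos hs, one_mul]
      · rw [if_neg hs, if_neg hs, zero_mul]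
    rw [hWW, hlc]
    apply lintegral_congr
    intro l
    have h3 : (fun s : ℝ => if ENNReal.ofReal s < volume E then (1:ℝ≥0∞) else 0) =
        ({s : ℝ | ENNReal.ofReal s < volume E}).indicator (fun _ => 1) := by
      funext s; simp [Set.indicator_apply]
    have hms : MeasurableSet {s : ℝ | ENNReal.ofReal s < volume E} :=
      measurableSet_lt ENNReal.measurable_ofReal measurable_const
    rw [h3, lintegral_indicator hms, Measure.restrict_restrict hms, setLIntegral_one,
      Set.inter_comm]
  rw [h1, h2]
  apply lintegral_mono_ae
  rw [ae_restrict_iff' measurableSet_Ioi]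
  apply ae_of_all
  intro l hl
  have hl0 : (0:ℝ) < l := hl
  -- LHS bound by min
  have hLb : volume (E ∩ {x | ENNReal.ofReal l < u x})
      ≤ min (volume E) (dd u (ENNReal.ofReal l)) := by
    apply le_min
    · exact measure_mono (Set.inter_subset_left)
    · apply measure_mono
      intro x hx
      exact ⟨hEΩ hx.1, hx.2⟩
  refine le_trans hLb ?_
  -- RHS bound from below via rational sup
  have hRb : ∀ (q : {q : ℚ // l < (q:ℝ)}),
      min (volume E) (dd u (ENNReal.ofReal (q:ℝ)))
        ≤ volume ((Set.Ioo (0:ℝ) 1 ∩ {x | ENNReal.ofReal l < rearr u x})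
          ∩ {s : ℝ | ENNReal.ofReal s < volume E}) := by
    intro q
    have hq0 : (0:ℝ) < (q:ℝ) := lt_trans hl0 q.2
    have hsub : Set.Ioo (0:ℝ) (min (volume E).toReal (dd u (ENNReal.ofReal (q:ℝ))).toReal)
        ⊆ (Set.Ioo (0:ℝ) 1 ∩ {x | ENNReal.ofReal l < rearr u x})
          ∩ {s : ℝ | ENNReal.ofReal s < volume E} := by
      intro s hs
      rcases hs with ⟨hs0, hs1⟩
      have hsE : s < (volume E).toReal := lt_of_lt_of_le hs1 (min_le_left _ _)
      have hsd : s < (dd u (ENNReal.ofReal (q:ℝ))).toReal :=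
        lt_of_lt_of_le hs1 (min_le_right _ _)
      have hsE' : ENNReal.ofReal s < volume E := ofReal_lt_of_lt_toReal hs0.le hvolEt hsE
      have hsd' : ENNReal.ofReal s < dd u (ENNReal.ofReal (q:ℝ)) :=
        ofReal_lt_of_lt_toReal hs0.le (dd_ne_top u _) hsd
      have hs1' : s < 1 := by
        have : (volume E).toReal ≤ 1 := by
          calc (volume E).toReal ≤ (1:ℝ≥0∞).toReal := ENNReal.toReal_mono (by norm_num) hvolE
          _ = 1 := by simp
        linarith
      refine ⟨⟨⟨hs0, hs1'⟩, ?_⟩, hsE'⟩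
      calc ENNReal.ofReal l < ENNReal.ofReal (q:ℝ) :=
            (ENNReal.ofReal_lt_ofReal_iff hq0).mpr q.2
      _ ≤ rearr u s := le_rearr_of_lt hsd'
    calc min (volume E) (dd u (ENNReal.ofReal (q:ℝ)))
        = ENNReal.ofReal (min (volume E).toReal (dd u (ENNReal.ofReal (q:ℝ))).toReal) := by
          rw [← ENNReal.toReal_min hvolEt (dd_ne_top u _), ENNReal.ofReal_toReal
            (ne_top_of_le_ne_top hvolEt (min_le_left _ _))]
    _ = volume (Set.Ioo (0:ℝ) (min (volume E).toReal (dd u (ENNReal.ofReal (q:ℝ))).toReal)) := by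
          rw [Real.volume_Ioo, sub_zero]
    _ ≤ _ := measure_mono hsub
  have hsup : min (volume E) (dd u (ENNReal.ofReal l)) =
      ⨆ (q : {q : ℚ // l < (q:ℝ)}), min (volume E) (dd u (ENNReal.ofReal (q:ℝ))) := by
    rw [dd_sup_rat u hl0.le, min_iSup]
  rw [hsup]
  exact iSup_le hRb

/-- Hardy–Littlewood inequality over (0,1). -/
lemma HL {u w : ℝ → ℝ≥0∞} (hu : Measurable u) (hw : Measurable w) :
    ∫⁻ x in Set.Ioo (0:ℝ) 1, u x * w x
      ≤ ∫⁻ x in Set.Ioo (0:ℝ) 1, rearr u x * rearr w x := by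
  rw [layercake hu hw (measurableSet_Ioo (a := (0:ℝ)) (b := (1:ℝ))),
    layercake (rearr_measurable u) (rearr_measurable w)
      (measurableSet_Ioo (a := (0:ℝ)) (b := (1:ℝ)))]
  apply lintegral_mono_ae
  rw [ae_restrict_iff' measurableSet_Ioi]
  apply ae_of_all
  intro l hl
  have hl0 : (0:ℝ) < l := hl
  have hEm : MeasurableSet (Set.Ioo (0:ℝ) 1 ∩ {x | ENNReal.ofReal l < w x}) :=
    (measurableSet_Ioo).inter (measurableSet_lt measurable_const hw)
  have hstep1 : ∫⁻ x in Set.Ioo (0:ℝ) 1 ∩ {x | ENNReal.ofReal l < w x}, u x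
      ≤ WW u (dd w (ENNReal.ofReal l)) := by
    have := setLIntegral_le_WW hu hEm (Set.inter_subset_left)
    have heq : volume (Set.Ioo (0:ℝ) 1 ∩ {x | ENNReal.ofReal l < w x})
        = dd w (ENNReal.ofReal l) := by
      unfold dd; congr 1
    rwa [heq] at this
  refine le_trans hstep1 ?_
  rw [WW_dd_sup u w hl0.le]
  apply iSup_le
  intro q
  have hq0 : (0:ℝ) < (q:ℝ) := lt_trans hl0 q.2
  rw [WW_eq (dd_le_one w _)]
  apply lintegral_mono_set
  intro s hs
  rcases hs with ⟨hs0, hs1⟩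
  have hs1' : s < 1 := by
    have : (dd w (ENNReal.ofReal (q:ℝ))).toReal ≤ 1 := by
      calc (dd w _).toReal ≤ (1:ℝ≥0∞).toReal := ENNReal.toReal_mono (by norm_num) (dd_le_one w _)
      _ = 1 := by simp
    linarith
  refine ⟨⟨hs0, hs1'⟩, ?_⟩
  calc ENNReal.ofReal l < ENNReal.ofReal (q:ℝ) := (ENNReal.ofReal_lt_ofReal_iff hq0).mpr q.2
  _ ≤ rearr w s := le_rearr_of_lt (ofReal_lt_of_lt_toReal hs0.le (dd_ne_top w _) hs1)




lemma inv_mul_cancel_left' {a : ℝ≥0∞} (h0 : a ≠ 0) (ht : a ≠ ⊤) (b : ℝ≥0∞) :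
    a⁻¹ * (a * b) = b := by
  rw [← mul_assoc, ENNReal.inv_mul_cancel h0 ht, one_mul]

lemma mul_inv_cancel_left' {a : ℝ≥0∞} (h0 : a ≠ 0) (ht : a ≠ ⊤) (b : ℝ≥0∞) :
    a * (a⁻¹ * b) = b := by
  rw [← mul_assoc, ENNReal.mul_inv_cancel h0 ht, one_mul]

lemma ennreal_div_le_div {a b c d : ℝ≥0∞} (h : a * d ≤ b * c)
    (hc0 : c ≠ 0) (hct : c ≠ ⊤) (hd0 : d ≠ 0) (hdt : d ≠ ⊤) :
    a * c⁻¹ ≤ b * d⁻¹ := by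
  have h2 : d⁻¹ * (a * d) * c⁻¹ ≤ d⁻¹ * (b * c) * c⁻¹ :=
    mul_le_mul' (mul_le_mul' le_rfl h) le_rfl
  calc a * c⁻¹ = d⁻¹ * (d * a) * c⁻¹ := by rw [← mul_assoc, ENNReal.inv_mul_cancel hd0 hdt, one_mul]
  _ = d⁻¹ * (a * d) * c⁻¹ := by rw [mul_comm d a]
  _ ≤ d⁻¹ * (b * c) * c⁻¹ := h2
  _ = b * (c * c⁻¹) * d⁻¹ := by ring
  _ = b * 1 * d⁻¹ := by rw [ENNReal.mul_inv_cancel hc0 hct]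
  _ = b * d⁻¹ := by rw [mul_one]

lemma mul_inv_le_one_of_le {a b : ℝ≥0∞} (h : a ≤ b) (h0 : b ≠ 0) (ht : b ≠ ⊤) :
    a * b⁻¹ ≤ 1 := by
  calc a * b⁻¹ ≤ b * b⁻¹ := mul_le_mul' h le_rfl
  _ = 1 := ENNReal.mul_inv_cancel h0 ht

section QC

variable (I : ℝ → ℝ) (f : ℝ → ℝ≥0∞)

/-- A monotone global extension of `I`. -/
def Itil : ℝ → ℝ := fun x => if x < 1 then (if 0 < x then I x else 0) else 1

variable {I}

lemma Itil_eq (hqc : Quasiconcave I) {x : ℝ} (hx : x ∈ Set.Ioo (0:ℝ) 1) :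
    Itil I x = I x := by
  unfold Itil
  rw [if_pos hx.2, if_pos hx.1]

lemma I_mem (hqc : Quasiconcave I) {x : ℝ} (hx : x ∈ Set.Ioo (0:ℝ) 1) :
    I x ∈ Set.Ioo (0:ℝ) 1 := hqc.1.mapsTo hx

lemma Itil_mono (hqc : Quasiconcave I) : Monotone (Itil I) := by
  intro x y hxy
  unfold Itil
  by_cases hy1 : y < 1
  · have hx1 : x < 1 := lt_of_le_of_lt hxy hy1
    rw [if_pos hx1, if_pos hy1]
    by_cases hx0 : 0 < x
    · rw [if_pos hx0, if_pos (lt_of_lt_of_le hx0 hxy)]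
      exact hqc.2.1 ⟨hx0, hx1⟩ ⟨lt_of_lt_of_le hx0 hxy, hy1⟩ hxy
    · rw [if_neg hx0]
      by_cases hy0 : 0 < y
      · rw [if_pos hy0]
        exact (I_mem hqc ⟨hy0, hy1⟩).1.le
      · rw [if_neg hy0]
  · rw [if_neg hy1]
    by_cases hx1 : x < 1
    · rw [if_pos hx1]
      by_cases hx0 : 0 < x
      · rw [if_pos hx0]
        exact (I_mem hqc ⟨hx0, hx1⟩).2.le
      · rw [if_neg hx0]; norm_num
    · rw [if_neg hx1]

lemma Itil_pos (hqc : Quasiconcave I) {x : ℝ} (hx : x ∈ Set.Ioo (0:ℝ) 1) :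
    0 < Itil I x := by rw [Itil_eq hqc hx]; exact (I_mem hqc hx).1

lemma Itil_lt_one (hqc : Quasiconcave I) {x : ℝ} (hx : x ∈ Set.Ioo (0:ℝ) 1) :
    Itil I x < 1 := by rw [Itil_eq hqc hx]; exact (I_mem hqc hx).2

lemma eIt_ne_zero (hqc : Quasiconcave I) {x : ℝ} (hx : x ∈ Set.Ioo (0:ℝ) 1) :
    ENNReal.ofReal (Itil I x) ≠ 0 := by
  simp only [ne_eq, ENNReal.ofReal_eq_zero, not_le]
  exact Itil_pos hqc hx

lemma eIt_ne_top {x : ℝ} : ENNReal.ofReal (Itil I x) ≠ ⊤ := ENNReal.ofReal_ne_top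

/-- I(t)/t antitone gives: s·I(t) ≤ t·I(s) for s ≤ t in (0,1). -/
lemma q2 (hqc : Quasiconcave I) {s t : ℝ} (hs : s ∈ Set.Ioo (0:ℝ) 1)
    (ht : t ∈ Set.Ioo (0:ℝ) 1) (hst : s ≤ t) : s * I t ≤ t * I s := by
  have := hqc.2.2.1 hs ht hst
  rw [div_le_div_iff₀ ht.1 hs.1] at this
  linarith [this]

/-- t ≤ I(t) on (0,1), from I(1⁻) = 1. -/
lemma q3 (hqc : Quasiconcave I) {u : ℝ} (hu : u ∈ Set.Ioo (0:ℝ) 1) : u ≤ I u := by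
  have hne : (nhdsWithin (1:ℝ) (Set.Ioo (0:ℝ) 1)).NeBot := by
    rw [← mem_closure_iff_nhdsWithin_neBot, closure_Ioo (by norm_num : (0:ℝ) ≠ 1)]
    exact ⟨by norm_num, le_rfl⟩
  have htI : Tendsto I (nhdsWithin 1 (Set.Ioo (0:ℝ) 1)) (nhds 1) := hqc.2.2.2.2
  have h1 : Tendsto (fun t => u * I t) (nhdsWithin 1 (Set.Ioo (0:ℝ) 1)) (nhds (u * 1)) :=
    (htI.const_mul u)
  have h2 : Tendsto (fun t : ℝ => t * I u) (nhdsWithin 1 (Set.Ioo (0:ℝ) 1)) (nhds (1 * I u)) :=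
    ((continuous_id.mul continuous_const).tendsto 1).mono_left nhdsWithin_le_nhds
  have hev : ∀ᶠ t in nhdsWithin (1:ℝ) (Set.Ioo (0:ℝ) 1), u * I t ≤ t * I u := by
    filter_upwards [self_mem_nhdsWithin,
      eventually_nhdsWithin_of_eventually_nhds (eventually_gt_nhds hu.2)] with t htΩ htu
    exact q2 hqc hu htΩ htu.le
  have := le_of_tendsto_of_tendsto h1 h2 hev
  rw [mul_one, one_mul] at this
  exact this

variable (I)

/-- primitive of the rearrangement -/
def FF : ℝ → ℝ≥0∞ := fun t => ∫⁻ s in Set.Ioo (0:ℝ) t, rearr f s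

/-- measurable version of R_I f* -/
def GG : ℝ → ℝ≥0∞ := fun t => (ENNReal.ofReal (Itil I t))⁻¹ * FF f t

variable {I}

lemma FF_mono : Monotone (FF f) := fun s t h =>
  lintegral_mono_set (Set.Ioo_subset_Ioo le_rfl h)

lemma FF_measurable : Measurable (FF f) := (FF_mono f).measurable

lemma GG_measurable (hqc : Quasiconcave I) : Measurable (GG I f) := by
  apply Measurable.mul _ (FF_measurable f)
  exact (ENNReal.measurable_ofReal.comp (Itil_mono hqc).measurable).inv

/-- t · f*(t) ≤ F(t) -/
lemma f2 {t : ℝ} (ht : 0 < t) : ENNReal.ofReal t * rearr f t ≤ FF f t := by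
  have h1 : ∫⁻ _ in Set.Ioo (0:ℝ) t, rearr f t ≤ FF f t := by
    apply lintegral_mono_ae
    rw [ae_restrict_iff' measurableSet_Ioo]
    exact ae_of_all _ (fun s hs => rearr_anti f hs.2.le)
  calc ENNReal.ofReal t * rearr f t = rearr f t * volume (Set.Ioo (0:ℝ) t) := by
        rw [Real.volume_Ioo, sub_zero, mul_comm]
  _ = ∫⁻ _ in Set.Ioo (0:ℝ) t, rearr f t := (setLIntegral_const _ _).symm
  _ ≤ FF f t := h1

/-- F(u) ≤ F(s) + (u−s)·f*(s) -/
lemma f3 {s u : ℝ} (hs : 0 < s) (hsu : s ≤ u) :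
    FF f u ≤ FF f s + ENNReal.ofReal (u - s) * rearr f s := by
  have hsplit : Set.Ioo (0:ℝ) u = Set.Ioo 0 s ∪ Set.Ico s u :=
    (Set.Ioo_union_Ico_eq_Ioo hs hsu).symm
  have hdisj : Disjoint (Set.Ioo (0:ℝ) s) (Set.Ico s u) := by
    apply Set.disjoint_left.mpr
    intro x hx1 hx2
    exact absurd hx2.1 (not_le.mpr hx1.2)
  have : FF f u = FF f s + ∫⁻ x in Set.Ico s u, rearr f x := by
    unfold FF
    rw [hsplit, lintegral_union measurableSet_Ico hdisj]
  rw [this]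
  apply add_le_add_right
  have h1 : ∫⁻ x in Set.Ico s u, rearr f x ≤ ∫⁻ _ in Set.Ico s u, rearr f s := by
    apply lintegral_mono_ae
    rw [ae_restrict_iff' measurableSet_Ico]
    exact ae_of_all _ (fun x hx => rearr_anti f hx.1)
  calc ∫⁻ x in Set.Ico s u, rearr f x ≤ ∫⁻ _ in Set.Ico s u, rearr f s := h1
  _ = rearr f s * ENNReal.ofReal (u - s) := by rw [setLIntegral_const, Real.volume_Ico]
  _ = ENNReal.ofReal (u - s) * rearr f s := mul_comm _ _

/-- r·F(u) ≤ u·F(r) for 0 < r ≤ u : "F(t)/t nonincreasing" -/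
lemma f4 {r u : ℝ} (hr : 0 < r) (hru : r ≤ u) :
    ENNReal.ofReal r * FF f u ≤ ENNReal.ofReal u * FF f r := by
  calc ENNReal.ofReal r * FF f u
      ≤ ENNReal.ofReal r * (FF f r + ENNReal.ofReal (u - r) * rearr f r) :=
        mul_le_mul' le_rfl (f3 f hr hru)
  _ = ENNReal.ofReal r * FF f r + ENNReal.ofReal (u - r) * (ENNReal.ofReal r * rearr f r) := by
        ring
  _ ≤ ENNReal.ofReal r * FF f r + ENNReal.ofReal (u - r) * FF f r :=
        add_le_add_right (mul_le_mul' le_rfl (f2 f hr)) _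
  _ = (ENNReal.ofReal r + ENNReal.ofReal (u - r)) * FF f r := by ring
  _ = ENNReal.ofReal u * FF f r := by
        rw [← ENNReal.ofReal_add hr.le (by linarith)]
        norm_num

end QC




section QC2

variable {I : ℝ → ℝ} (f : ℝ → ℝ≥0∞)

/-- (E): u·G(u) ≤ 4·∫_0^u G -/
lemma P3 (hqc : Quasiconcave I) {u : ℝ} (hu : u ∈ Set.Ioo (0:ℝ) 1) :
    ENNReal.ofReal u * GG I f u ≤ 4 * ∫⁻ x in Set.Ioo (0:ℝ) u, GG I f x := by
  set a := ENNReal.ofReal (Itil I u) with ha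
  have ha0 : a ≠ 0 := eIt_ne_zero hqc hu
  have hat : a ≠ ⊤ := eIt_ne_top
  have hhalf : ∀ r ∈ Set.Ioo (u/2) u, (2:ℝ≥0∞)⁻¹ * (a⁻¹ * FF f u) ≤ GG I f r := by
    intro r hr
    have hr0 : 0 < r := lt_trans (by linarith [hu.1] : (0:ℝ) < u/2) hr.1
    have hrΩ : r ∈ Set.Ioo (0:ℝ) 1 := ⟨hr0, lt_trans hr.2 hu.2⟩
    have hinv : a⁻¹ ≤ (ENNReal.ofReal (Itil I r))⁻¹ :=
      ENNReal.inv_le_inv.mpr (ENNReal.ofReal_le_ofReal (Itil_mono hqc hr.2.le))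
    have hkey : (ENNReal.ofReal u)⁻¹ * ENNReal.ofReal (u/2) = (2:ℝ≥0∞)⁻¹ := by
      rw [show u/2 = u * (1/2) by ring, ENNReal.ofReal_mul hu.1.le,
        show ENNReal.ofReal ((1:ℝ)/2) = (2:ℝ≥0∞)⁻¹ by
          rw [show (1:ℝ)/2 = (2:ℝ)⁻¹ by norm_num, ENNReal.ofReal_inv_of_pos (by norm_num)]
          norm_num]
      exact inv_mul_cancel_left' (by simp [hu.1] : ENNReal.ofReal u ≠ 0) ENNReal.ofReal_ne_top _
    have hFr : (2:ℝ≥0∞)⁻¹ * FF f u ≤ FF f r := by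
      have h4 := f4 f hr0 hr.2.le
      have h5 : ENNReal.ofReal (u/2) * FF f u ≤ ENNReal.ofReal u * FF f r :=
        le_trans (mul_le_mul' (ENNReal.ofReal_le_ofReal hr.1.le) le_rfl) h4
      have h6 := mul_le_mul' (le_refl (ENNReal.ofReal u)⁻¹) h5
      rw [inv_mul_cancel_left' (by simp [hu.1] : ENNReal.ofReal u ≠ 0)
        ENNReal.ofReal_ne_top] at h6
      calc (2:ℝ≥0∞)⁻¹ * FF f u = (ENNReal.ofReal u)⁻¹ * ENNReal.ofReal (u/2) * FF f u := by
            rw [hkey]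
      _ = (ENNReal.ofReal u)⁻¹ * (ENNReal.ofReal (u/2) * FF f u) := by rw [mul_assoc]
      _ ≤ FF f r := h6
    calc (2:ℝ≥0∞)⁻¹ * (a⁻¹ * FF f u) = a⁻¹ * ((2:ℝ≥0∞)⁻¹ * FF f u) := by ring
    _ ≤ a⁻¹ * FF f r := mul_le_mul' le_rfl hFr
    _ ≤ (ENNReal.ofReal (Itil I r))⁻¹ * FF f r := mul_le_mul' hinv le_rfl
    _ = GG I f r := rfl
  have hint : ENNReal.ofReal (u/2) * ((2:ℝ≥0∞)⁻¹ * (a⁻¹ * FF f u))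
      ≤ ∫⁻ x in Set.Ioo (0:ℝ) u, GG I f x := by
    have h1 : ∫⁻ _ in Set.Ioo (u/2) u, (2:ℝ≥0∞)⁻¹ * (a⁻¹ * FF f u)
        ≤ ∫⁻ x in Set.Ioo (u/2) u, GG I f x := by
      apply lintegral_mono_ae
      rw [ae_restrict_iff' measurableSet_Ioo]
      exact ae_of_all _ hhalf
    calc ENNReal.ofReal (u/2) * ((2:ℝ≥0∞)⁻¹ * (a⁻¹ * FF f u))
        = ((2:ℝ≥0∞)⁻¹ * (a⁻¹ * FF f u)) * volume (Set.Ioo (u/2) u) := by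
          rw [Real.volume_Ioo, show u - u/2 = u/2 by ring, mul_comm]
    _ = ∫⁻ _ in Set.Ioo (u/2) u, (2:ℝ≥0∞)⁻¹ * (a⁻¹ * FF f u) := (setLIntegral_const _ _).symm
    _ ≤ ∫⁻ x in Set.Ioo (u/2) u, GG I f x := h1
    _ ≤ ∫⁻ x in Set.Ioo (0:ℝ) u, GG I f x :=
          lintegral_mono_set (Set.Ioo_subset_Ioo (by linarith [hu.1]) le_rfl)
  have h22 : (4:ℝ≥0∞) * (2⁻¹ * 2⁻¹) = 1 := by
    rw [show (4:ℝ≥0∞) = 2*2 by norm_num,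
      show (2:ℝ≥0∞)*2*(2⁻¹*2⁻¹) = (2*2⁻¹)*(2*2⁻¹) by ring,
      ENNReal.mul_inv_cancel (by norm_num) (by norm_num), one_mul]
  have hkey : ENNReal.ofReal (u/2) = ENNReal.ofReal u * (2:ℝ≥0∞)⁻¹ := by
    rw [show u/2 = u * (1/2) by ring, ENNReal.ofReal_mul hu.1.le,
      show ENNReal.ofReal ((1:ℝ)/2) = (2:ℝ≥0∞)⁻¹ by
        rw [show (1:ℝ)/2 = (2:ℝ)⁻¹ by norm_num, ENNReal.ofReal_inv_of_pos (by norm_num)]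
        norm_num]
  calc ENNReal.ofReal u * GG I f u = ENNReal.ofReal u * (a⁻¹ * FF f u) := rfl
  _ = 4 * (ENNReal.ofReal (u/2) * ((2:ℝ≥0∞)⁻¹ * (a⁻¹ * FF f u))) := by
      rw [hkey, show (4:ℝ≥0∞) * (ENNReal.ofReal u * 2⁻¹ * (2⁻¹ * (a⁻¹ * FF f u)))
        = (4 * (2⁻¹ * 2⁻¹)) * (ENNReal.ofReal u * (a⁻¹ * FF f u)) by ring, h22, one_mul]
    _ ≤ 4 * ∫⁻ x in Set.Ioo (0:ℝ) u, GG I f x := mul_le_mul' le_rfl hint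

end QC2




section QC3

variable {I : ℝ → ℝ} (f : ℝ → ℝ≥0∞)

variable (I) in
/-- the nonincreasing envelope of G from the right -/
def gbar : ℝ → ℝ≥0∞ := fun t => ⨆ x ∈ Set.Ico t 1 ∩ Set.Ioo (0:ℝ) 1, GG I f x

lemma gbar_anti : Antitone (gbar I f) := by
  intro s t hst
  exact biSup_mono (fun x hx => ⟨⟨le_trans hst hx.1.1, hx.1.2⟩, hx.2⟩)

lemma gbar_measurable : Measurable (gbar I f) := (gbar_anti f).measurable

lemma le_gbar {t x : ℝ} (htx : t ≤ x) (hx : x ∈ Set.Ioo (0:ℝ) 1) :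
    GG I f x ≤ gbar I f t := by
  apply le_biSup
  exact ⟨⟨htx, hx.2⟩, hx⟩

lemma rearrG_le_gbar {s : ℝ} (hs : s ∈ Set.Ioo (0:ℝ) 1) :
    rearr (GG I f) s ≤ gbar I f s :=
  rearr_le_of_bound hs.1 (fun x hx hsx => le_gbar f hsx hx)

/-- rearr gbar ≤ gbar on (0,1), by antitonicity. -/
lemma rearr_gbar_le {s : ℝ} (hs : s ∈ Set.Ioo (0:ℝ) 1) :
    rearr (gbar I f) s ≤ gbar I f s :=
  rearr_le_of_bound hs.1 (fun x _ hsx => gbar_anti f hsx)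

/-- cancel identity: I(t)·G(t) = F(t) on (0,1) -/
lemma IG_eq_F (hqc : Quasiconcave I) {t : ℝ} (ht : t ∈ Set.Ioo (0:ℝ) 1) :
    ENNReal.ofReal (Itil I t) * GG I f t = FF f t :=
  mul_inv_cancel_left' (eIt_ne_zero hqc ht) eIt_ne_top _

/-- P1 pointwise core: I(s)·(rearr G)(s) ≤ I(t)·gbar(t) for 0 < s ≤ t < 1 -/
lemma P1core (hqc : Quasiconcave I) {s t : ℝ} (ht : t ∈ Set.Ioo (0:ℝ) 1)
    (hs : s ∈ Set.Ioc (0:ℝ) t) :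
    ENNReal.ofReal (Itil I s) * rearr (GG I f) s
      ≤ ENNReal.ofReal (Itil I t) * gbar I f t := by
  have hsΩ : s ∈ Set.Ioo (0:ℝ) 1 := ⟨hs.1, lt_of_le_of_lt hs.2 ht.2⟩
  have h1 : ENNReal.ofReal (Itil I s) * rearr (GG I f) s
      ≤ ENNReal.ofReal (Itil I s) * gbar I f s :=
    mul_le_mul' le_rfl (rearrG_le_gbar f hsΩ)
  refine le_trans h1 ?_
  unfold gbar
  rw [ENNReal.mul_iSup]
  apply iSup_le
  intro x
  rw [ENNReal.mul_iSup]
  apply iSup_le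
  intro hx
  rcases hx with ⟨⟨hsx, _⟩, hxΩ⟩
  rcases le_total x t with hxt | htx
  · calc ENNReal.ofReal (Itil I s) * GG I f x
        ≤ ENNReal.ofReal (Itil I x) * GG I f x :=
          mul_le_mul' (ENNReal.ofReal_le_ofReal (Itil_mono hqc hsx)) le_rfl
    _ = FF f x := IG_eq_F f hqc hxΩ
    _ ≤ FF f t := FF_mono f hxt
    _ = ENNReal.ofReal (Itil I t) * GG I f t := (IG_eq_F f hqc ht).symm
    _ ≤ ENNReal.ofReal (Itil I t) * gbar I f t :=
          mul_le_mul' le_rfl (le_gbar f le_rfl ht)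
  · exact mul_le_mul' (ENNReal.ofReal_le_ofReal (Itil_mono hqc hs.2))
      (le_gbar f htx hxΩ)

variable (I) in
/-- the (Itil-version of the) operator S_I applied to G -/
def SIG : ℝ → ℝ≥0∞ := fun t =>
  (ENNReal.ofReal (Itil I t))⁻¹ *
    ⨆ s ∈ Set.Ioc (0:ℝ) t, ENNReal.ofReal (Itil I s) * rearr (GG I f) s

/-- P1 : S_I G ≤ gbar on (0,1) -/
lemma P1 (hqc : Quasiconcave I) {t : ℝ} (ht : t ∈ Set.Ioo (0:ℝ) 1) :
    SIG I f t ≤ gbar I f t := by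
  have h1 : (⨆ s ∈ Set.Ioc (0:ℝ) t, ENNReal.ofReal (Itil I s) * rearr (GG I f) s)
      ≤ ENNReal.ofReal (Itil I t) * gbar I f t :=
    iSup₂_le (fun s hs => P1core f hqc ht hs)
  calc SIG I f t ≤ (ENNReal.ofReal (Itil I t))⁻¹
        * (ENNReal.ofReal (Itil I t) * gbar I f t) := mul_le_mul' le_rfl h1
  _ = gbar I f t := inv_mul_cancel_left' (eIt_ne_zero hqc ht) eIt_ne_top _

/-- P2 : rearr G ≤ S_I G on (0,1) -/
lemma P2 (hqc : Quasiconcave I) {t : ℝ} (ht : t ∈ Set.Ioo (0:ℝ) 1) :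
    rearr (GG I f) t ≤ SIG I f t := by
  have h1 : ENNReal.ofReal (Itil I t) * rearr (GG I f) t
      ≤ ⨆ s ∈ Set.Ioc (0:ℝ) t, ENNReal.ofReal (Itil I s) * rearr (GG I f) s :=
    le_biSup (fun s => ENNReal.ofReal (Itil I s) * rearr (GG I f) s) ⟨ht.1, le_rfl⟩
  calc rearr (GG I f) t
      = (ENNReal.ofReal (Itil I t))⁻¹ * (ENNReal.ofReal (Itil I t) * rearr (GG I f) t) :=
        (inv_mul_cancel_left' (eIt_ne_zero hqc ht) eIt_ne_top _).symm
  _ ≤ SIG I f t := mul_le_mul' le_rfl h1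

variable (I) in
/-- ratio u/I(u) as ENNReal -/
def Rt : ℝ → ℝ≥0∞ := fun u => ENNReal.ofReal u * (ENNReal.ofReal (Itil I u))⁻¹

lemma Rt_mono (hqc : Quasiconcave I) {u e : ℝ} (hu : u ∈ Set.Ioo (0:ℝ) 1)
    (he : e ∈ Set.Ioo (0:ℝ) 1) (hue : u ≤ e) : Rt I u ≤ Rt I e := by
  have h := q2 hqc hu he hue
  have h' : ENNReal.ofReal u * ENNReal.ofReal (Itil I e)
      ≤ ENNReal.ofReal e * ENNReal.ofReal (Itil I u) := by
    rw [← ENNReal.ofReal_mul hu.1.le, ← ENNReal.ofReal_mul he.1.le,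
      Itil_eq hqc he, Itil_eq hqc hu]
    exact ENNReal.ofReal_le_ofReal h
  exact ennreal_div_le_div h' (eIt_ne_zero hqc hu) eIt_ne_top (eIt_ne_zero hqc he) eIt_ne_top

lemma Rt_le_one (hqc : Quasiconcave I) {u : ℝ} (hu : u ∈ Set.Ioo (0:ℝ) 1) :
    Rt I u ≤ 1 := by
  apply mul_inv_le_one_of_le _ (eIt_ne_zero hqc hu) eIt_ne_top
  apply ENNReal.ofReal_le_ofReal
  rw [Itil_eq hqc hu]
  exact q3 hqc hu

/-- P4 : G(x) ≤ G(s) + (x/I(x))·f*(s) for s ≤ x in (0,1) -/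
lemma P4 (hqc : Quasiconcave I) {s x : ℝ} (hs : s ∈ Set.Ioo (0:ℝ) 1)
    (hx : x ∈ Set.Ioo (0:ℝ) 1) (hsx : s ≤ x) :
    GG I f x ≤ GG I f s + Rt I x * rearr f s := by
  have h3 := f3 f hs.1 hsx
  calc GG I f x = (ENNReal.ofReal (Itil I x))⁻¹ * FF f x := rfl
  _ ≤ (ENNReal.ofReal (Itil I x))⁻¹ * (FF f s + ENNReal.ofReal (x - s) * rearr f s) :=
      mul_le_mul' le_rfl h3
  _ = (ENNReal.ofReal (Itil I x))⁻¹ * FF f s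
      + (ENNReal.ofReal (x-s) * (ENNReal.ofReal (Itil I x))⁻¹) * rearr f s := by ring
  _ ≤ GG I f s + Rt I x * rearr f s := by
      apply add_le_add
      · exact mul_le_mul' (ENNReal.inv_le_inv.mpr
          (ENNReal.ofReal_le_ofReal (Itil_mono hqc hsx))) le_rfl
      · exact mul_le_mul' (mul_le_mul'
          (ENNReal.ofReal_le_ofReal (by linarith [hs.1] : x - s ≤ x)) le_rfl) le_rfl

end QC3




section QC4

variable {I : ℝ → ℝ} (f : ℝ → ℝ≥0∞)

/-- ∫_{(0,x)} G ≤ ∫_{(0,x)} rearr G (Hardy–Littlewood for initial intervals) -/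
lemma intG_le_intRearrG (hqc : Quasiconcave I) {x : ℝ} (hx : x ∈ Set.Ioo (0:ℝ) 1) :
    ∫⁻ s in Set.Ioo (0:ℝ) x, GG I f s ≤ FF (GG I f) x := by
  have h1 := setLIntegral_le_WW (GG_measurable f hqc)
    (measurableSet_Ioo (a := (0:ℝ)) (b := x))
    (Set.Ioo_subset_Ioo le_rfl hx.2.le)
  rw [Real.volume_Ioo, sub_zero] at h1
  rwa [WW_eq (by exact ENNReal.ofReal_le_one.mpr hx.2.le),
    ENNReal.toReal_ofReal hx.1.le] at h1

/-- P6 : e·gbar(e) ≤ 4·∫_{(0,e)} rearr G -/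
lemma P6 (hqc : Quasiconcave I) {e : ℝ} (he : e ∈ Set.Ioo (0:ℝ) 1) :
    ENNReal.ofReal e * gbar I f e ≤ 4 * FF (GG I f) e := by
  have hterm : ∀ x ∈ Set.Ico e 1 ∩ Set.Ioo (0:ℝ) 1,
      ENNReal.ofReal e * GG I f x ≤ 4 * FF (GG I f) e := by
    intro x hx
    have hxΩ : x ∈ Set.Ioo (0:ℝ) 1 := hx.2
    have hex : e ≤ x := hx.1.1
    have hx0 : (ENNReal.ofReal x) ≠ 0 := by simp [hxΩ.1]
    have s1 : ENNReal.ofReal x * GG I f x ≤ 4 * FF (GG I f) x :=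
      le_trans (P3 f hqc hxΩ) (mul_le_mul' le_rfl (intG_le_intRearrG f hqc hxΩ))
    have s3 : ENNReal.ofReal e * FF (GG I f) x ≤ ENNReal.ofReal x * FF (GG I f) e :=
      f4 (GG I f) he.1 hex
    calc ENNReal.ofReal e * GG I f x
        = (ENNReal.ofReal x)⁻¹ * (ENNReal.ofReal x * (ENNReal.ofReal e * GG I f x)) :=
          (inv_mul_cancel_left' hx0 ENNReal.ofReal_ne_top _).symm
    _ = (ENNReal.ofReal x)⁻¹ * (ENNReal.ofReal e * (ENNReal.ofReal x * GG I f x)) := by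
          ring_nf
    _ ≤ (ENNReal.ofReal x)⁻¹ * (ENNReal.ofReal e * (4 * FF (GG I f) x)) :=
          mul_le_mul' le_rfl (mul_le_mul' le_rfl s1)
    _ = (ENNReal.ofReal x)⁻¹ * (4 * (ENNReal.ofReal e * FF (GG I f) x)) := by ring_nf
    _ ≤ (ENNReal.ofReal x)⁻¹ * (4 * (ENNReal.ofReal x * FF (GG I f) e)) :=
          mul_le_mul' le_rfl (mul_le_mul' le_rfl s3)
    _ = (ENNReal.ofReal x)⁻¹ * (ENNReal.ofReal x * (4 * FF (GG I f) e)) := by ring_nf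
    _ = 4 * FF (GG I f) e := inv_mul_cancel_left' hx0 ENNReal.ofReal_ne_top _
  unfold gbar
  rw [ENNReal.mul_iSup]
  apply iSup_le
  intro x
  rw [ENNReal.mul_iSup]
  exact iSup_le (fun hx => hterm x hx)

/-- C1 for e < 1 -/
lemma C1lt (hqc : Quasiconcave I) {e : ℝ} (he : e ∈ Set.Ioo (0:ℝ) 1) :
    ∫⁻ s in Set.Ioo (0:ℝ) e, gbar I f s ≤ 9 * FF (GG I f) e := by
  have hpt : ∀ s ∈ Set.Ioo (0:ℝ) e,
      gbar I f s ≤ (GG I f s + Rt I e * rearr f s) + gbar I f e := by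
    intro s hs
    have hsΩ : s ∈ Set.Ioo (0:ℝ) 1 := ⟨hs.1, lt_trans hs.2 he.2⟩
    apply iSup₂_le
    intro x hx
    rcases hx with ⟨⟨hsx, _⟩, hxΩ⟩
    rcases le_total x e with hxe | hex
    · calc GG I f x ≤ GG I f s + Rt I x * rearr f s := P4 f hqc hsΩ hxΩ hsx
      _ ≤ GG I f s + Rt I e * rearr f s :=
          add_le_add_right (mul_le_mul' (Rt_mono hqc hxΩ he hxe) le_rfl) _
      _ ≤ _ := le_self_add
    · calc GG I f x ≤ gbar I f e := le_gbar f hex hxΩ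
      _ ≤ _ := le_add_self
  have hint : ∫⁻ s in Set.Ioo (0:ℝ) e, gbar I f s
      ≤ ∫⁻ s in Set.Ioo (0:ℝ) e, ((GG I f s + Rt I e * rearr f s) + gbar I f e) := by
    apply lintegral_mono_ae
    rw [ae_restrict_iff' measurableSet_Ioo]
    exact ae_of_all _ hpt
  refine le_trans hint ?_
  have hmeas1 : Measurable (fun s => GG I f s + Rt I e * rearr f s) :=
    (GG_measurable f hqc).add ((rearr_measurable f).const_mul _)
  have hmeas2 : Measurable (GG I f) := GG_measurable f hqc
  rw [lintegral_add_left hmeas1, lintegral_add_left hmeas2]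
  have t1 : ∫⁻ s in Set.Ioo (0:ℝ) e, GG I f s ≤ FF (GG I f) e := intG_le_intRearrG f hqc he
  have t2 : ∫⁻ s in Set.Ioo (0:ℝ) e, Rt I e * rearr f s ≤ 4 * FF (GG I f) e := by
    rw [lintegral_const_mul _ (rearr_measurable f)]
    have : Rt I e * FF f e = ENNReal.ofReal e * GG I f e := by
      unfold Rt GG; ring
    rw [show (∫⁻ s in Set.Ioo (0:ℝ) e, rearr f s) = FF f e from rfl, this]
    exact le_trans (mul_le_mul' le_rfl (le_gbar f le_rfl he)) (P6 f hqc he)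
  have t3 : ∫⁻ _ in Set.Ioo (0:ℝ) e, gbar I f e ≤ 4 * FF (GG I f) e := by
    rw [setLIntegral_const, Real.volume_Ioo, sub_zero, mul_comm]
    exact P6 f hqc he
  calc (∫⁻ s in Set.Ioo (0:ℝ) e, GG I f s)
        + (∫⁻ s in Set.Ioo (0:ℝ) e, Rt I e * rearr f s)
        + ∫⁻ _ in Set.Ioo (0:ℝ) e, gbar I f e
      ≤ FF (GG I f) e + 4 * FF (GG I f) e + 4 * FF (GG I f) e :=
        add_le_add (add_le_add t1 t2) t3
  _ = 9 * FF (GG I f) e := by ring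

/-- monotone exhaustion of a set integral over (0,b) -/
lemma lint_Ioo_iSup {h : ℝ → ℝ≥0∞} (hh : Measurable h) {b : ℝ} {bs : ℕ → ℝ}
    (hmono : Monotone bs) (hb : ∀ n, bs n ≤ b) (happrox : ∀ c, c < b → ∃ n, c < bs n) :
    ∫⁻ x in Set.Ioo (0:ℝ) b, h x = ⨆ n, ∫⁻ x in Set.Ioo (0:ℝ) (bs n), h x := by
  have hsets : Set.Ioo (0:ℝ) b = ⋃ n, Set.Ioo (0:ℝ) (bs n) := by
    ext x
    simp only [Set.mem_Ioo, Set.mem_iUnion]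
    constructor
    · rintro ⟨hx0, hxb⟩
      obtain ⟨n, hn⟩ := happrox x hxb
      exact ⟨n, hx0, hn⟩
    · rintro ⟨n, hx0, hxn⟩
      exact ⟨hx0, lt_of_lt_of_le hxn (hb n)⟩
  have hind : ∀ x, (⋃ n, Set.Ioo (0:ℝ) (bs n)).indicator h x
      = ⨆ n, (Set.Ioo (0:ℝ) (bs n)).indicator h x := by
    intro x
    by_cases hx : x ∈ ⋃ n, Set.Ioo (0:ℝ) (bs n)
    · rw [Set.indicator_of_mem hx]
      obtain ⟨n, hn⟩ := Set.mem_iUnion.mp hx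
      apply le_antisymm
      · exact le_iSup_of_le n (by rw [Set.indicator_of_mem hn])
      · apply iSup_le
        intro m
        by_cases hm : x ∈ Set.Ioo (0:ℝ) (bs m)
        · rw [Set.indicator_of_mem hm]
        · rw [Set.indicator_of_notMem hm]; exact zero_le
    · rw [Set.indicator_of_notMem hx]
      symm
      rw [ENNReal.iSup_eq_zero]
      intro n
      rw [Set.indicator_of_notMem (fun hn => hx (Set.mem_iUnion.mpr ⟨n, hn⟩))]
  calc ∫⁻ x in Set.Ioo (0:ℝ) b, h x
      = ∫⁻ x, (⋃ n, Set.Ioo (0:ℝ) (bs n)).indicator h x := by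
        rw [lintegral_indicator (MeasurableSet.iUnion (fun n => measurableSet_Ioo)), ← hsets]
  _ = ∫⁻ x, ⨆ n, (Set.Ioo (0:ℝ) (bs n)).indicator h x := lintegral_congr hind
  _ = ⨆ n, ∫⁻ x, (Set.Ioo (0:ℝ) (bs n)).indicator h x := by
        apply lintegral_iSup (fun n => hh.indicator measurableSet_Ioo)
        intro n m hnm x
        dsimp only
        by_cases hx : x ∈ Set.Ioo (0:ℝ) (bs n)
        · rw [Set.indicator_of_mem hx,
            Set.indicator_of_mem (Set.Ioo_subset_Ioo le_rfl (hmono hnm) hx)]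
        · rw [Set.indicator_of_notMem hx]; exact zero_le
  _ = ⨆ n, ∫⁻ x in Set.Ioo (0:ℝ) (bs n), h x := by
        exact iSup_congr (fun n => lintegral_indicator measurableSet_Ioo _)

/-- C1 : ∫_{(0,e)} gbar ≤ 9 ∫_{(0,e)} rearr G for e ∈ (0,1] -/
lemma C1 (hqc : Quasiconcave I) {e : ℝ} (he0 : 0 < e) (he1 : e ≤ 1) :
    ∫⁻ s in Set.Ioo (0:ℝ) e, gbar I f s ≤ 9 * FF (GG I f) e := by
  rcases lt_or_eq_of_le he1 with h | h
  · exact C1lt f hqc ⟨he0, h⟩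
  · subst h
    have hbs : ∀ n : ℕ, (1 - 1/(n+2) : ℝ) ∈ Set.Ioo (0:ℝ) 1 := by
      intro n
      constructor
      · have h2 : (1:ℝ)/(n+2) ≤ 1/2 := by
          apply div_le_div_of_nonneg_left (by norm_num) (by norm_num)
          · push_cast; linarith [Nat.cast_nonneg (α := ℝ) n]
        linarith
      · have : (0:ℝ) < 1/(n+2) := by positivity
        linarith
    have hmono : Monotone (fun n : ℕ => (1 - 1/(n+2) : ℝ)) := by
      intro n m hnm
      simp only
      have : (1:ℝ)/(m+2) ≤ 1/(n+2) := by
        apply div_le_div_of_nonneg_left (by norm_num) (by positivity)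
        push_cast; exact_mod_cast by exact_mod_cast add_le_add_left (Nat.cast_le.mpr hnm) 2
      linarith
    rw [lint_Ioo_iSup (gbar_measurable f) hmono (fun n => (hbs n).2.le)
      (fun c hc => ?happ)]
    · apply iSup_le
      intro n
      calc ∫⁻ x in Set.Ioo (0:ℝ) (1 - 1/(n+2)), gbar I f x
          ≤ 9 * FF (GG I f) (1 - 1/(n+2)) := C1lt f hqc (hbs n)
      _ ≤ 9 * FF (GG I f) 1 := mul_le_mul' le_rfl (FF_mono _ (hbs n).2.le)
    · case happ =>
        obtain ⟨n, hn⟩ := exists_nat_one_div_lt (show 0 < 1 - c by linarith)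
        refine ⟨n, ?_⟩
        have h2 : (1:ℝ)/(n+2) < 1/(n+1) := by
          apply div_lt_div_of_pos_left (by norm_num) (by positivity)
          push_cast; linarith
        have := lt_trans h2 hn
        linarith

end QC4




section AT

variable (G : ℝ → ℝ≥0∞)

/-- λ₀(a) = G*(a) -/
def lam (a : ℝ) : ℝ≥0∞ := rearr G a

/-- m(a) = |{G > λ₀(a)}| -/
def mm (a : ℝ) : ℝ≥0∞ := dd G (lam G a)

/-- the plateau set -/
def PP (a : ℝ) : Set ℝ := {x | x ∈ Set.Ioo (0:ℝ) 1 ∧ G x = lam G a}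

def hfun (a τ : ℝ) : ℝ≥0∞ := volume (PP G a ∩ Set.Iio τ)

def vv (a : ℝ) : ℝ≥0∞ := ENNReal.ofReal a - mm G a

def tauSet (a : ℝ) : Set ℝ := {τ ∈ Set.Icc (0:ℝ) 1 | hfun G a τ ≤ vv G a}

def tau (a : ℝ) : ℝ := sSup (tauSet G a)

def Efam (a : ℝ) : Set ℝ :=
  if 0 < a then {x | x ∈ Set.Ioo (0:ℝ) 1 ∧ lam G a < G x} ∪ (PP G a ∩ Set.Iio (tau G a))
  else ∅

variable {G}

lemma measurable_strict_set (hG : Measurable G) (l : ℝ≥0∞) :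
    MeasurableSet {x | x ∈ Set.Ioo (0:ℝ) 1 ∧ l < G x} := by
  have : {x | x ∈ Set.Ioo (0:ℝ) 1 ∧ l < G x} = Set.Ioo (0:ℝ) 1 ∩ {x | l < G x} := rfl
  rw [this]
  exact measurableSet_Ioo.inter (measurableSet_lt measurable_const hG)

lemma PP_measurable (hG : Measurable G) (a : ℝ) : MeasurableSet (PP G a) := by
  have : PP G a = Set.Ioo (0:ℝ) 1 ∩ {x | G x = lam G a} := rfl
  rw [this]
  exact measurableSet_Ioo.inter (hG (measurableSet_singleton _))

lemma Efam_measurable (hG : Measurable G) (a : ℝ) : MeasurableSet (Efam G a) := by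
  unfold Efam
  split_ifs
  · exact (measurable_strict_set hG _).union ((PP_measurable hG a).inter measurableSet_Iio)
  · exact MeasurableSet.empty

lemma Efam_subset (a : ℝ) : Efam G a ⊆ Set.Ioo (0:ℝ) 1 := by
  unfold Efam
  split_ifs
  · rintro x (hx | hx)
    · exact hx.1
    · exact hx.1.1
  · exact Set.empty_subset _

/-- AT1 : m(a) ≤ a -/
lemma mm_le (hG : Measurable G) {a : ℝ} (ha : 0 < a) : mm G a ≤ ENNReal.ofReal a := by
  by_cases htop : lam G a = ⊤
  · unfold mm dd
    rw [htop]
    convert (zero_le : (0:ℝ≥0∞) ≤ _)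
    convert measure_empty
    · ext x; simp [not_top_lt]
    · infer_instance
  · -- union over rationals above lam G a
    set ι := {q : ℚ // lam G a < ((Real.toNNReal (q:ℝ)) : ℝ≥0∞)} with hι
    have hU : {x | x ∈ Set.Ioo (0:ℝ) 1 ∧ lam G a < G x} =
        ⋃ (q : ι), {x | x ∈ Set.Ioo (0:ℝ) 1 ∧ ((Real.toNNReal (q:ℝ)) : ℝ≥0∞) < G x} := by
      ext x
      simp only [Set.mem_iUnion, Set.mem_setOf_eq]
      constructor
      · rintro ⟨hx, hlt⟩
        obtain ⟨q, _, hq1, hq2⟩ := ENNReal.lt_iff_exists_rat_btwn.mp hlt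
        exact ⟨⟨q, hq1⟩, hx, hq2⟩
      · rintro ⟨q, hx, hlt⟩
        exact ⟨hx, lt_trans q.2 hlt⟩
    unfold mm dd
    rw [hU, Directed.measure_iUnion]
    · apply iSup_le
      intro q
      have hq : lam G a < ((Real.toNNReal (q:ℝ)) : ℝ≥0∞) := q.2
      -- lam G a = sInf {l | dd G l ≤ a}, so there is l in the set below q
      obtain ⟨l, hl, hlq⟩ := sInf_lt_iff.mp hq
      calc volume {x | x ∈ Set.Ioo (0:ℝ) 1 ∧ ((Real.toNNReal (q:ℝ)) : ℝ≥0∞) < G x}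
          ≤ dd G l := measure_mono (fun x hx => ⟨hx.1, lt_of_le_of_lt hlq.le hx.2⟩)
      _ ≤ ENNReal.ofReal a := hl
    · intro q₁ q₂
      rcases le_total ((Real.toNNReal ((q₁:ℚ):ℝ)) : ℝ≥0∞) ((Real.toNNReal ((q₂:ℚ):ℝ)) : ℝ≥0∞)
        with h | h
      · exact ⟨q₁, le_rfl, fun x hx => ⟨hx.1, lt_of_le_of_lt h hx.2⟩⟩
      · exact ⟨q₂, fun x hx => ⟨hx.1, lt_of_le_of_lt h hx.2⟩, le_rfl⟩

/-- AT2 : a ≤ |{G ≥ λ₀(a)}| -/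
lemma ge_set_vol (hG : Measurable G) {a : ℝ} (ha : 0 < a) (ha1 : a ≤ 1) :
    ENNReal.ofReal a ≤ volume {x | x ∈ Set.Ioo (0:ℝ) 1 ∧ lam G a ≤ G x} := by
  by_cases h0 : lam G a = 0
  · have : {x | x ∈ Set.Ioo (0:ℝ) 1 ∧ lam G a ≤ G x} = Set.Ioo (0:ℝ) 1 := by
      ext x; simp [h0]
    rw [this, Real.volume_Ioo]
    simpa using ENNReal.ofReal_le_ofReal ha1
  · set ι := {q : ℚ // ((Real.toNNReal (q:ℝ)) : ℝ≥0∞) < lam G a} with hι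
    have hne : Nonempty ι := ⟨⟨0, by
      simpa using pos_iff_ne_zero.mpr h0⟩⟩
    have hsub : (⋂ (q : ι), {x | x ∈ Set.Ioo (0:ℝ) 1 ∧ ((Real.toNNReal (q:ℝ)) : ℝ≥0∞) < G x})
        ⊆ {x | x ∈ Set.Ioo (0:ℝ) 1 ∧ lam G a ≤ G x} := by
      intro x hx
      rw [Set.mem_iInter] at hx
      obtain q₀ := Classical.arbitrary ι
      refine ⟨(hx q₀).1, ?_⟩
      by_contra hc
      push_neg at hc
      obtain ⟨q, _, hq1, hq2⟩ := ENNReal.lt_iff_exists_rat_btwn.mp hc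
      exact absurd hq1 (not_lt.mpr (hx ⟨q, hq2⟩).2.le)
    refine le_trans ?_ (measure_mono hsub)
    rw [Directed.measure_iInter]
    · apply le_iInf
      intro q
      have hq : ((Real.toNNReal ((q:ℚ):ℝ)) : ℝ≥0∞) < lam G a := q.2
      have hnotin : ¬ (dd G ((Real.toNNReal ((q:ℚ):ℝ)) : ℝ≥0∞) ≤ ENNReal.ofReal a) := by
        intro hin
        have hle : lam G a ≤ ((Real.toNNReal ((q:ℚ):ℝ)) : ℝ≥0∞) := rearr_le hin
        exact absurd hle (not_le.mpr hq)
      exact (not_le.mp hnotin).le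
    · exact fun q => ((measurable_strict_set hG _)).nullMeasurableSet
    · intro q₁ q₂
      rcases le_total ((Real.toNNReal ((q₁:ℚ):ℝ)) : ℝ≥0∞) ((Real.toNNReal ((q₂:ℚ):ℝ)) : ℝ≥0∞)
        with h | h
      · exact ⟨q₂, fun x hx => ⟨hx.1, lt_of_le_of_lt h hx.2⟩, le_rfl⟩
      · exact ⟨q₁, le_rfl, fun x hx => ⟨hx.1, lt_of_le_of_lt h hx.2⟩⟩
    · refine ⟨Classical.arbitrary ι, ?_⟩
      apply ne_top_of_le_ne_top (show ((1:ℝ≥0∞) ≠ ⊤) by norm_num)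
      calc volume {x | x ∈ Set.Ioo (0:ℝ) 1 ∧
            ((Real.toNNReal ((Classical.arbitrary ι : ι):ℝ)) : ℝ≥0∞) < G x}
          ≤ volume (Set.Ioo (0:ℝ) 1) := measure_mono (fun x hx => hx.1)
      _ = 1 := by rw [Real.volume_Ioo]; norm_num

end AT




section AT2sec

variable {G : ℝ → ℝ≥0∞}

lemma ge_split (hG : Measurable G) (a : ℝ) :
    volume {x | x ∈ Set.Ioo (0:ℝ) 1 ∧ lam G a ≤ G x} = mm G a + volume (PP G a) := by
  have hset : {x | x ∈ Set.Ioo (0:ℝ) 1 ∧ lam G a ≤ G x} =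
      {x | x ∈ Set.Ioo (0:ℝ) 1 ∧ lam G a < G x} ∪ PP G a := by
    ext x
    simp only [Set.mem_union, Set.mem_setOf_eq, PP]
    constructor
    · rintro ⟨hx, hle⟩
      rcases lt_or_eq_of_le hle with h | h
      · exact Or.inl ⟨hx, h⟩
      · exact Or.inr ⟨hx, h.symm⟩
    · rintro (⟨hx, h⟩ | ⟨hx, h⟩)
      · exact ⟨hx, h.le⟩
      · exact ⟨hx, h.ge⟩
  have hdisj : Disjoint {x | x ∈ Set.Ioo (0:ℝ) 1 ∧ lam G a < G x} (PP G a) := by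
    rw [Set.disjoint_left]
    rintro x ⟨_, hlt⟩ ⟨_, heq⟩
    exact absurd heq (ne_of_gt hlt)
  rw [hset, measure_union hdisj (PP_measurable hG a)]
  rfl

lemma vv_le_volPP (hG : Measurable G) {a : ℝ} (ha : 0 < a) (ha1 : a ≤ 1) :
    vv G a ≤ volume (PP G a) := by
  rw [vv, tsub_le_iff_right]
  calc ENNReal.ofReal a ≤ volume {x | x ∈ Set.Ioo (0:ℝ) 1 ∧ lam G a ≤ G x} :=
        ge_set_vol hG ha ha1
  _ = mm G a + volume (PP G a) := ge_split hG a
  _ = volume (PP G a) + mm G a := add_comm _ _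

lemma hfun_mono (a : ℝ) : Monotone (hfun G a) :=
  fun τ τ' h => measure_mono (Set.inter_subset_inter le_rfl (Set.Iio_subset_Iio h))

lemma hfun_nonpos {a τ : ℝ} (hτ : τ ≤ 0) : hfun G a τ = 0 := by
  unfold hfun
  convert measure_empty
  · ext x
    simp only [Set.mem_inter_iff, Set.mem_Iio, Set.mem_empty_iff_false, iff_false]
    rintro ⟨hx, hlt⟩
    exact absurd (lt_of_lt_of_le hlt hτ) (not_lt.mpr hx.1.1.le)
  · infer_instance

lemma hfun_le_volPP (a τ : ℝ) : hfun G a τ ≤ volume (PP G a) :=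
  measure_mono Set.inter_subset_left

lemma volPP_ne_top : volume (PP G a) ≠ ⊤ := by
  apply ne_top_of_le_ne_top (show (1:ℝ≥0∞) ≠ ⊤ by norm_num)
  calc volume (PP G a) ≤ volume (Set.Ioo (0:ℝ) 1) := measure_mono (fun x hx => hx.1)
  _ = 1 := by rw [Real.volume_Ioo]; norm_num

lemma zero_mem_tauSet (a : ℝ) : (0:ℝ) ∈ tauSet G a :=
  ⟨⟨le_rfl, by norm_num⟩, by rw [hfun_nonpos le_rfl]; exact zero_le⟩

lemma tauSet_bdd (a : ℝ) : BddAbove (tauSet G a) :=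
  ⟨1, fun τ hτ => hτ.1.2⟩

lemma tau_nonneg (a : ℝ) : 0 ≤ tau G a := le_csSup (tauSet_bdd a) (zero_mem_tauSet a)

lemma tau_le_one (a : ℝ) : tau G a ≤ 1 :=
  csSup_le ⟨0, zero_mem_tauSet a⟩ (fun τ hτ => hτ.1.2)

lemma hfun_tau_le (a : ℝ) : hfun G a (tau G a) ≤ vv G a := by
  have hset : Set.Iio (tau G a) = ⋃ n : ℕ, Set.Iio (tau G a - 1/(n+1)) := by
    ext x
    simp only [Set.mem_Iio, Set.mem_iUnion]
    constructor
    · intro hx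
      obtain ⟨n, hn⟩ := exists_nat_one_div_lt (show 0 < tau G a - x by linarith)
      exact ⟨n, by push_cast at hn ⊢; linarith⟩
    · rintro ⟨n, hn⟩
      have : (0:ℝ) < 1/(n+1) := by positivity
      linarith
  unfold hfun
  rw [hset, Set.inter_iUnion, Directed.measure_iUnion]
  · apply iSup_le
    intro n
    obtain ⟨τ', hτ'S, hττ'⟩ : ∃ τ' ∈ tauSet G a, tau G a - 1/(n+1) < τ' := by
      apply exists_lt_of_lt_csSup ⟨0, zero_mem_tauSet a⟩
      show tau G a - 1/(n+1) < tau G a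
      have : (0:ℝ) < 1/(n+1) := by positivity
      linarith
    calc volume (PP G a ∩ Set.Iio (tau G a - 1/(n+1)))
        ≤ hfun G a τ' := hfun_mono a hττ'.le
    _ ≤ vv G a := hτ'S.2
  · intro n m
    rcases le_total ((1:ℝ)/(n+1)) (1/(m+1)) with h | h
    · exact ⟨n, le_rfl, Set.inter_subset_inter le_rfl (Set.Iio_subset_Iio (by linarith))⟩
    · exact ⟨m, Set.inter_subset_inter le_rfl (Set.Iio_subset_Iio (by linarith)), le_rfl⟩

lemma vv_le_hfun_tau (hG : Measurable G) {a : ℝ} (ha : 0 < a) (ha1 : a ≤ 1) :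
    vv G a ≤ hfun G a (tau G a) := by
  rcases lt_or_eq_of_le (tau_le_one (G := G) a) with htau | htau
  · -- tau < 1
    set t := tau G a with hts
    have hstep : vv G a ≤ volume (PP G a ∩ Set.Iic t) := by
      have hset : (PP G a ∩ Set.Iic t) = ⋂ n : ℕ, PP G a ∩ Set.Iio (t + (1-t)/(n+2)) := by
        ext x
        simp only [Set.mem_inter_iff, Set.mem_Iic, Set.mem_Iio, Set.mem_iInter]
        constructor
        · rintro ⟨hx, hle⟩
          refine fun n => ⟨hx, ?_⟩
          have : (0:ℝ) < (1-t)/(n+2) := div_pos (by linarith) (by positivity)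
          linarith
        · intro hx
          refine ⟨(hx 0).1, ?_⟩
          by_contra hc
          push_neg at hc
          obtain ⟨n, hn⟩ := exists_nat_one_div_lt
            (show 0 < (x - t)/(1-t) from div_pos (by linarith) (by linarith))
          have h2 : (1:ℝ)/(n+2) < (x-t)/(1-t) := by
            refine lt_trans ?_ hn
            apply div_lt_div_of_pos_left (by norm_num) (by positivity)
            push_cast; linarith
          have h3 : (1-t) * (1/(n+2)) < (1-t) * ((x-t)/(1-t)) := by
            apply mul_lt_mul_of_pos_left h2 (by linarith)
          rw [mul_div_cancel₀ _ (by linarith : (1:ℝ)-t ≠ 0)] at h3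
          have h4 : t + (1-t)/(n+2) < x := by
            have : (1-t) * (1/(n+2)) = (1-t)/(n+2) := by ring
            linarith [h3, this.symm.le]
          exact absurd (hx n).2 (not_lt.mpr h4.le)
      rw [hset, Directed.measure_iInter]
      · apply le_iInf
        intro n
        have hτn1 : t + (1-t)/(n+2) ≤ 1 := by
          have h1 : (1-t)/(n+2) ≤ (1-t)/1 := by
            apply div_le_div_of_nonneg_left (by linarith) (by norm_num)
            push_cast; linarith [Nat.cast_nonneg (α := ℝ) n]
          simp only [div_one] at h1
          linarith
        have hτn0 : t < t + (1-t)/(n+2) := by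
          have : (0:ℝ) < (1-t)/(n+2) := div_pos (by linarith) (by positivity)
          linarith
        have hnotin : t + (1-t)/(n+2) ∉ tauSet G a := by
          intro hin
          exact absurd (le_csSup (tauSet_bdd a) hin) (not_le.mpr hτn0)
        have : ¬ (hfun G a (t + (1-t)/(n+2)) ≤ vv G a) := by
          intro hle
          exact hnotin ⟨⟨by linarith [tau_nonneg (G := G) a], hτn1⟩, hle⟩
        exact (not_le.mp this).le
      · exact fun n => ((PP_measurable hG a).inter measurableSet_Iio).nullMeasurableSet
      · intro n m
        rcases le_total ((1-t)/(n+2)) ((1-t)/(m+2)) with h | h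
        · exact ⟨n, le_rfl, Set.inter_subset_inter le_rfl (Set.Iio_subset_Iio (by linarith))⟩
        · exact ⟨m, Set.inter_subset_inter le_rfl (Set.Iio_subset_Iio (by linarith)), le_rfl⟩
      · exact ⟨0, ne_top_of_le_ne_top volPP_ne_top (measure_mono Set.inter_subset_left)⟩
    refine le_trans hstep ?_
    calc volume (PP G a ∩ Set.Iic t)
        ≤ volume ((PP G a ∩ Set.Iio t) ∪ {t}) := by
          apply measure_mono
          rintro x ⟨hx, hle⟩
          have hle' : x ≤ t := hle
          rcases lt_or_eq_of_le hle' with h | h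
          · exact Or.inl ⟨hx, h⟩
          · exact Or.inr (by simp [h])
    _ ≤ volume (PP G a ∩ Set.Iio t) + volume ({t} : Set ℝ) := measure_union_le _ _
    _ = hfun G a t := by rw [Real.volume_singleton, add_zero]; rfl
  · -- tau = 1
    have h1 : hfun G a (tau G a) = volume (PP G a) := by
      unfold hfun
      congr 1
      ext x
      simp only [Set.mem_inter_iff, Set.mem_Iio, htau]
      exact ⟨fun h => h.1, fun h => ⟨h, h.1.2⟩⟩
    rw [h1]
    exact vv_le_volPP hG ha ha1

lemma hfun_tau (hG : Measurable G) {a : ℝ} (ha : 0 < a) (ha1 : a ≤ 1) :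
    hfun G a (tau G a) = vv G a :=
  le_antisymm (hfun_tau_le a) (vv_le_hfun_tau hG ha ha1)

lemma vol_Efam (hG : Measurable G) {a : ℝ} (ha : 0 < a) (ha1 : a ≤ 1) :
    volume (Efam G a) = ENNReal.ofReal a := by
  unfold Efam
  rw [if_pos ha]
  have hdisj : Disjoint {x | x ∈ Set.Ioo (0:ℝ) 1 ∧ lam G a < G x} (PP G a ∩ Set.Iio (tau G a)) := by
    rw [Set.disjoint_left]
    rintro x ⟨_, hlt⟩ ⟨⟨_, heq⟩, _⟩
    exact absurd heq (ne_of_gt hlt)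
  rw [measure_union hdisj ((PP_measurable hG a).inter measurableSet_Iio)]
  have h2 : volume (PP G a ∩ Set.Iio (tau G a)) = vv G a := hfun_tau hG ha ha1
  rw [h2]
  exact add_tsub_cancel_of_le (mm_le hG ha)

end AT2sec




section AT3sec

variable {G : ℝ → ℝ≥0∞}

/-- the attainment inequality: ∫_0^a G* ≤ ∫_{E_a} G -/
lemma intRearr_le_Efam (hG : Measurable G) {a : ℝ} (ha : 0 < a) (ha1 : a ≤ 1) :
    ∫⁻ s in Set.Ioo (0:ℝ) a, rearr G s ≤ ∫⁻ x in Efam G a, G x := by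
  have hEm : MeasurableSet (Efam G a) := Efam_measurable hG a
  have hL : ∫⁻ s in Set.Ioo (0:ℝ) a, rearr G s =
      ∫⁻ l in Set.Ioi (0:ℝ), volume (Set.Ioo (0:ℝ) a ∩ {s | ENNReal.ofReal l < rearr G s}) := by
    have hlc := layercake (u := fun _ => (1:ℝ≥0∞)) (w := rearr G) measurable_const
      (rearr_measurable G) (measurableSet_Ioo (a := (0:ℝ)) (b := a))
    simp only [one_mul] at hlc
    rw [hlc]
    exact lintegral_congr fun l => setLIntegral_one _
  have hR : ∫⁻ x in Efam G a, G x =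
      ∫⁻ l in Set.Ioi (0:ℝ), volume (Efam G a ∩ {x | ENNReal.ofReal l < G x}) := by
    have hlc := layercake (u := fun _ => (1:ℝ≥0∞)) (w := G) measurable_const hG hEm
    simp only [one_mul] at hlc
    rw [hlc]
    exact lintegral_congr fun l => setLIntegral_one _
  rw [hL, hR]
  apply lintegral_mono
  intro l
  dsimp only
  have h1 : volume (Set.Ioo (0:ℝ) a ∩ {s | ENNReal.ofReal l < rearr G s})
      ≤ min (ENNReal.ofReal a) (dd G (ENNReal.ofReal l)) := dd_rearr_le ha.le
  refine le_trans h1 ?_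
  rcases le_or_gt (lam G a) (ENNReal.ofReal l) with hcase | hcase
  · -- high level: Efam ∩ {G > l} = {x ∈ Ω | G x > l}
    have hset : Efam G a ∩ {x | ENNReal.ofReal l < G x}
        = {x | x ∈ Set.Ioo (0:ℝ) 1 ∧ ENNReal.ofReal l < G x} := by
      apply Set.Subset.antisymm
      · rintro x ⟨hxE, hxl⟩
        exact ⟨Efam_subset a hxE, hxl⟩
      · rintro x ⟨hxΩ, hxl⟩
        have hGx : lam G a < G x := lt_of_le_of_lt hcase hxl
        refine ⟨?_, hxl⟩
        unfold Efam
        rw [if_pos ha]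
        exact Or.inl ⟨hxΩ, hGx⟩
    rw [hset]
    exact le_trans (min_le_right _ _) le_rfl
  · -- low level: Efam ⊆ {G > l}
    have hset : Efam G a ∩ {x | ENNReal.ofReal l < G x} = Efam G a := by
      apply Set.inter_eq_self_of_subset_left
      intro x hx
      unfold Efam at hx
      rw [if_pos ha] at hx
      rcases hx with hx | hx
      · exact lt_trans hcase hx.2
      · rw [Set.mem_setOf_eq, hx.1.2]
        exact hcase
    rw [hset, vol_Efam hG ha ha1]
    exact min_le_left _ _

/-- nestedness of the sets E_a -/
lemma Efam_mono (hG : Measurable G) {a b : ℝ} (ha : 0 < a) (hab : a ≤ b) (hb1 : b ≤ 1) :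
    Efam G a ⊆ Efam G b := by
  have hb : 0 < b := lt_of_lt_of_le ha hab
  have hlam : lam G b ≤ lam G a := rearr_anti G hab
  rcases lt_or_eq_of_le hlam with hlt | heq
  · -- strict: Efam a ⊆ {G ≥ lam a} ⊆ {lam b < G} ⊆ Efam b
    intro x hx
    have hxΩ : x ∈ Set.Ioo (0:ℝ) 1 := Efam_subset a hx
    have hge : lam G a ≤ G x := by
      unfold Efam at hx
      rw [if_pos ha] at hx
      rcases hx with hx | hx
      · exact hx.2.le
      · exact hx.1.2.ge
    unfold Efam
    rw [if_pos hb]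
    exact Or.inl ⟨hxΩ, lt_of_lt_of_le hlt hge⟩
  · -- equal rearrangement values
    have hPP : PP G a = PP G b := by unfold PP; rw [heq]
    have hmm : mm G a = mm G b := by unfold mm; rw [heq]
    have hvv : vv G a ≤ vv G b := by
      unfold vv; rw [hmm]
      exact tsub_le_tsub_right (ENNReal.ofReal_le_ofReal hab) _
    have htauS : tauSet G a ⊆ tauSet G b := by
      intro τ hτ
      refine ⟨hτ.1, ?_⟩
      have : hfun G b τ = hfun G a τ := by unfold hfun; rw [hPP]
      rw [this]
      exact le_trans hτ.2 hvv
    have htau : tau G a ≤ tau G b :=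
      csSup_le_csSup (tauSet_bdd b) ⟨0, zero_mem_tauSet a⟩ htauS
    unfold Efam
    rw [if_pos ha, if_pos hb]
    apply Set.union_subset_union
    · intro x hx; exact ⟨hx.1, by rw [heq]; exact hx.2⟩
    · rw [hPP]
      exact Set.inter_subset_inter le_rfl (Set.Iio_subset_Iio htau)

end AT3sec




section PSI

variable (G k : ℝ → ℝ≥0∞)

/-- e(μ) = |{k > μ}| -/
def ee (μ : ℝ) : ℝ := (dd k (ENNReal.ofReal μ)).toReal

variable {k}

lemma ee_anti : Antitone (ee k) := fun μ μ' h =>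
  ENNReal.toReal_mono (dd_ne_top k _) (dd_anti k (ENNReal.ofReal_le_ofReal h))

lemma ee_nonneg (μ : ℝ) : 0 ≤ ee k μ := ENNReal.toReal_nonneg

lemma ee_le_one (μ : ℝ) : ee k μ ≤ 1 := by
  calc ee k μ ≤ (1:ℝ≥0∞).toReal := ENNReal.toReal_mono (by norm_num) (dd_le_one k _)
  _ = 1 := by simp

variable (k) in
/-- left-regularized nested family -/
def Eprime (μ : ℝ) : Set ℝ :=
  ⋂ (q : ℚ) (_ : 0 < (q:ℝ) ∧ (q:ℝ) < μ), Efam G (ee k (q:ℝ))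

variable {G}

lemma Eprime_measurable (hG : Measurable G) (μ : ℝ) : MeasurableSet (Eprime G k μ) :=
  MeasurableSet.iInter fun q => MeasurableSet.iInter fun _ => Efam_measurable hG _

lemma Efam_ee_mono (hG : Measurable G) {μ ν : ℝ} (h : μ ≤ ν) :
    Efam G (ee k ν) ⊆ Efam G (ee k μ) := by
  by_cases h0 : 0 < ee k ν
  · exact Efam_mono hG h0 (ee_anti h) (ee_le_one μ)
  · unfold Efam
    rw [if_neg h0]
    exact Set.empty_subset _

lemma Efam_subset_Eprime (hG : Measurable G) {μ : ℝ} :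
    Efam G (ee k μ) ⊆ Eprime G k μ := by
  apply Set.subset_iInter₂
  rintro q ⟨hq0, hqμ⟩
  exact Efam_ee_mono hG hqμ.le

lemma Eprime_subset_Omega (hG : Measurable G) {μ : ℝ} (hμ : 0 < μ) :
    Eprime G k μ ⊆ Set.Ioo (0:ℝ) 1 := by
  obtain ⟨q, hq0, hqμ⟩ := exists_rat_btwn hμ
  refine le_trans (Set.iInter₂_subset q ⟨by exact_mod_cast hq0, hqμ⟩) (Efam_subset _)

variable (G k) in
/-- the test function Ψ -/
def Psi : ℝ → ℝ≥0∞ := fun t =>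
  ∫⁻ μ in Set.Ioi (0:ℝ), (Eprime G k μ).indicator (fun _ => 1) t

lemma psi_ker_meas (hG : Measurable G) :
    MeasurableSet {p : ℝ × ℝ | p.2 ∈ Eprime G k p.1} := by
  have : {p : ℝ × ℝ | p.2 ∈ Eprime G k p.1} =
      ⋂ (q : ℚ), ({p : ℝ × ℝ | 0 < (q:ℝ) ∧ (q:ℝ) < p.1}ᶜ
        ∪ {p : ℝ × ℝ | p.2 ∈ Efam G (ee k (q:ℝ))}) := by
    ext p
    simp only [Set.mem_setOf_eq, Set.mem_iInter, Eprime, Set.mem_union, Set.mem_compl_iff]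
    constructor
    · intro h q
      by_cases hq : 0 < (q:ℝ) ∧ (q:ℝ) < p.1
      · exact Or.inr (h q hq)
      · exact Or.inl hq
    · intro h q hq
      rcases h q with h' | h'
      · exact absurd hq h'
      · exact h'
  rw [this]
  apply MeasurableSet.iInter
  intro q
  apply MeasurableSet.union
  · apply MeasurableSet.compl
    by_cases hq : 0 < (q:ℝ)
    · have : {p : ℝ × ℝ | 0 < (q:ℝ) ∧ (q:ℝ) < p.1} = (Set.Ioi (q:ℝ)).preimage Prod.fst := by
        ext p; simp [hq]
      rw [this]
      exact measurable_fst measurableSet_Ioi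
    · have : {p : ℝ × ℝ | 0 < (q:ℝ) ∧ (q:ℝ) < p.1} = ∅ := by
        ext p; simp [hq]
      rw [this]
      exact MeasurableSet.empty
  · exact measurable_snd (Efam_measurable hG _)

lemma psi_uncurry_meas (hG : Measurable G) :
    Measurable (Function.uncurry fun (μ t : ℝ) =>
      (Eprime G k μ).indicator (fun _ => (1:ℝ≥0∞)) t) := by
  have heq : (Function.uncurry fun (μ t : ℝ) =>
      (Eprime G k μ).indicator (fun _ => (1:ℝ≥0∞)) t) =
      ({p : ℝ × ℝ | p.2 ∈ Eprime G k p.1}).indicator (fun _ => 1) := by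
    funext p
    rcases p with ⟨μ, t⟩
    by_cases h : t ∈ Eprime G k μ
    · rw [Function.uncurry_apply_pair, Set.indicator_of_mem h,
        Set.indicator_of_mem (by exact h : (μ, t) ∈ {p : ℝ × ℝ | p.2 ∈ Eprime G k p.1})]
    · rw [Function.uncurry_apply_pair, Set.indicator_of_notMem h,
        Set.indicator_of_notMem (by exact h : (μ, t) ∉ {p : ℝ × ℝ | p.2 ∈ Eprime G k p.1})]
  rw [heq]
  exact (measurable_const).indicator (psi_ker_meas hG)

lemma Psi_measurable (hG : Measurable G) : Measurable (Psi G k) := by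
  have := Measurable.lintegral_prod_right'
    (ν := volume.restrict (Set.Ioi (0:ℝ)))
    (f := fun p : ℝ × ℝ => (Eprime G k p.2).indicator (fun _ => (1:ℝ≥0∞)) p.1) ?hm
  · exact this
  case hm =>
    have h2 := (psi_uncurry_meas (k := k) hG).comp
      (measurable_snd.prodMk measurable_fst : Measurable fun p : ℝ × ℝ => (p.2, p.1))
    exact h2

end PSI




section PSI2

variable {G k : ℝ → ℝ≥0∞}

lemma Psi_eq_zero_of_not_mem (hno : ∀ μ : ℝ, 0 < μ → t ∉ Eprime G k μ) :
    Psi G k t = 0 := by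
  unfold Psi
  rw [← lintegral_zero (μ := volume.restrict (Set.Ioi (0:ℝ)))]
  apply setLIntegral_congr_fun measurableSet_Ioi
  intro μ hμ
  dsimp only
  rw [Set.indicator_of_notMem (hno μ hμ)]

/-- key distribution comparison: the distribution of Ψ is below that of k -/
lemma dd_Psi_le (hG : Measurable G) (l : ℝ≥0∞) : dd (Psi G k) l ≤ dd k l := by
  by_cases htop : l = ⊤
  · subst htop
    have : {x | x ∈ Set.Ioo (0:ℝ) 1 ∧ ⊤ < Psi G k x} = ∅ := by
      ext x; simp [not_top_lt]
    unfold dd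
    rw [this]
    simp
  by_cases hzero : l = 0
  · subst hzero
    have hsub : {x | x ∈ Set.Ioo (0:ℝ) 1 ∧ 0 < Psi G k x} ⊆
        ⋃ (q : {q : ℚ // 0 < (q:ℝ)}), Efam G (ee k ((q:ℚ):ℝ)) := by
      rintro t ⟨htΩ, htpos⟩
      by_contra hc
      simp only [Set.mem_iUnion, not_exists] at hc
      have hno : ∀ μ : ℝ, 0 < μ → t ∉ Eprime G k μ := by
        intro μ hμ t_mem
        obtain ⟨q, hq0, hqμ⟩ := exists_rat_btwn hμ
        have hq0' : 0 < (q:ℝ) := by exact_mod_cast hq0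
        have : t ∈ Efam G (ee k (q:ℝ)) :=
          Set.iInter₂_subset q ⟨hq0', hqμ⟩ t_mem
        exact hc ⟨q, hq0'⟩ this
      exact absurd (Psi_eq_zero_of_not_mem hno) (ne_of_gt htpos)
    calc dd (Psi G k) 0 ≤ volume (⋃ (q : {q : ℚ // 0 < (q:ℝ)}),
          Efam G (ee k ((q:ℚ):ℝ))) := measure_mono hsub
    _ ≤ dd k 0 := by
        rw [Directed.measure_iUnion]
        · apply iSup_le
          intro q
          by_cases h0 : 0 < ee k (q:ℝ)
          · rw [vol_Efam hG h0 (ee_le_one _)]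
            rw [show ENNReal.ofReal (ee k ((q:ℚ):ℝ)) = dd k (ENNReal.ofReal (q:ℝ)) from
              ENNReal.ofReal_toReal (dd_ne_top k _)]
            exact dd_anti k zero_le
          · unfold Efam
            rw [if_neg h0]
            simp
        · intro q₁ q₂
          rcases le_total ((q₁:ℚ):ℝ) ((q₂:ℚ):ℝ) with h | h
          · exact ⟨q₁, le_rfl, Efam_ee_mono hG h⟩
          · exact ⟨q₂, Efam_ee_mono hG h, le_rfl⟩
  -- main case : 0 < l < ⊤
  · set c := l.toReal with hc
    have hc0 : 0 < c := ENNReal.toReal_pos hzero htop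
    have hlc : l = ENNReal.ofReal c := (ENNReal.ofReal_toReal htop).symm
    have hsub : {x | x ∈ Set.Ioo (0:ℝ) 1 ∧ l < Psi G k x} ⊆ Efam G (ee k c) := by
      rintro t ⟨htΩ, htl⟩
      have hex : ∃ μ : ℝ, c < μ ∧ t ∈ Eprime G k μ := by
        by_contra hno
        push_neg at hno
        have hbound : Psi G k t ≤ ENNReal.ofReal c := by
          unfold Psi
          calc ∫⁻ μ in Set.Ioi (0:ℝ), (Eprime G k μ).indicator (fun _ => 1) t
              ≤ ∫⁻ μ in Set.Ioi (0:ℝ), (Set.Ioc (0:ℝ) c).indicator (fun _ => 1) μ := by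
                apply lintegral_mono_ae
                rw [ae_restrict_iff' measurableSet_Ioi]
                apply ae_of_all
                intro μ hμ
                by_cases hmem : t ∈ Eprime G k μ
                · have hμc : μ ≤ c := by
                    by_contra hgt
                    push_neg at hgt
                    exact hno μ hgt hmem
                  have hmc : μ ∈ Set.Ioc (0:ℝ) c := ⟨hμ, hμc⟩
                  rw [Set.indicator_of_mem hmem, Set.indicator_of_mem hmc]
                · rw [Set.indicator_of_notMem hmem]
                  exact zero_le
          _ = ENNReal.ofReal c := by
                rw [lintegral_indicator measurableSet_Ioc,
                  Measure.restrict_restrict measurableSet_Ioc]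
                rw [Set.inter_eq_self_of_subset_left (Set.Ioc_subset_Ioi_self)]
                rw [setLIntegral_one, Real.volume_Ioc, sub_zero]
        rw [hlc] at htl
        exact absurd hbound (not_le.mpr htl)
      obtain ⟨μ, hcμ, hmem⟩ := hex
      obtain ⟨q, hcq, hqμ⟩ := exists_rat_btwn hcμ
      have hq0 : 0 < (q:ℝ) := lt_trans hc0 hcq
      have ht_q : t ∈ Efam G (ee k (q:ℝ)) := Set.iInter₂_subset q ⟨hq0, hqμ⟩ hmem
      exact Efam_ee_mono hG hcq.le ht_q
    calc dd (Psi G k) l ≤ volume (Efam G (ee k c)) := measure_mono hsub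
    _ ≤ dd k l := by
        by_cases h0 : 0 < ee k c
        · rw [vol_Efam hG h0 (ee_le_one _),
            show ENNReal.ofReal (ee k c) = dd k (ENNReal.ofReal c) from
              ENNReal.ofReal_toReal (dd_ne_top k _), ← hlc]
        · unfold Efam
          rw [if_neg h0]
          simp

/-- Tonelli : ∫_{l>0} ∫_{E'(l)} G = ∫_Ω G·Ψ -/
lemma psi_tonelli (hG : Measurable G) :
    ∫⁻ l in Set.Ioi (0:ℝ), ∫⁻ x in Eprime G k l, G x
      = ∫⁻ t in Set.Ioo (0:ℝ) 1, G t * Psi G k t := by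
  have hker : Measurable (Function.uncurry fun (l t : ℝ) =>
      (Eprime G k l).indicator (fun _ => (1:ℝ≥0∞)) t * G t) := by
    apply Measurable.mul (psi_uncurry_meas hG)
    exact hG.comp measurable_snd
  have h1 : ∀ l ∈ Set.Ioi (0:ℝ), ∫⁻ x in Eprime G k l, G x
      = ∫⁻ t in Set.Ioo (0:ℝ) 1, (Eprime G k l).indicator (fun _ => (1:ℝ≥0∞)) t * G t := by
    intro l hl
    have heq : ∀ t, (Eprime G k l).indicator (fun _ => (1:ℝ≥0∞)) t * G t
        = (Eprime G k l).indicator G t := by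
      intro t
      by_cases ht : t ∈ Eprime G k l
      · rw [Set.indicator_of_mem ht, Set.indicator_of_mem ht, one_mul]
      · rw [Set.indicator_of_notMem ht, Set.indicator_of_notMem ht, zero_mul]
    rw [lintegral_congr (fun t => heq t),
      lintegral_indicator (Eprime_measurable hG l),
      Measure.restrict_restrict (Eprime_measurable hG l),
      Set.inter_eq_self_of_subset_left (Eprime_subset_Omega hG hl)]
  have hswap := lintegral_lintegral_swap
    (μ := volume.restrict (Set.Ioi (0:ℝ))) (ν := volume.restrict (Set.Ioo (0:ℝ) 1))
    (f := fun l t => (Eprime G k l).indicator (fun _ => (1:ℝ≥0∞)) t * G t) hker.aemeasurable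
  calc ∫⁻ l in Set.Ioi (0:ℝ), ∫⁻ x in Eprime G k l, G x
      = ∫⁻ l in Set.Ioi (0:ℝ), ∫⁻ t in Set.Ioo (0:ℝ) 1,
          (Eprime G k l).indicator (fun _ => (1:ℝ≥0∞)) t * G t := by
        apply setLIntegral_congr_fun measurableSet_Ioi
        exact h1
  _ = ∫⁻ t in Set.Ioo (0:ℝ) 1, ∫⁻ l in Set.Ioi (0:ℝ),
          (Eprime G k l).indicator (fun _ => (1:ℝ≥0∞)) t * G t := hswap
  _ = ∫⁻ t in Set.Ioo (0:ℝ) 1, G t * Psi G k t := by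
        apply setLIntegral_congr_fun measurableSet_Ioo
        intro t _
        have hsec : Measurable fun l : ℝ => (Eprime G k l).indicator (fun _ => (1:ℝ≥0∞)) t := by
          have := (psi_uncurry_meas (k := k) hG).comp
            (measurable_id.prodMk measurable_const : Measurable fun l : ℝ => (l, t))
          exact this
        dsimp only
        rw [lintegral_mul_const _ hsec, mul_comm]
        rfl

end PSI2




section CHAIN

variable {I : ℝ → ℝ}

/-- the per-level estimate in the upper bound -/
lemma level_chain (f k : ℝ → ℝ≥0∞) (hqc : Quasiconcave I) (hk : Measurable k)
    {l : ℝ} (hl : 0 < l) :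
    ∫⁻ x in Set.Ioo (0:ℝ) 1 ∩ {x | ENNReal.ofReal l < k x}, gbar I f x
      ≤ 9 * ∫⁻ x in Eprime (GG I f) k l, GG I f x := by
  have hEm : MeasurableSet (Set.Ioo (0:ℝ) 1 ∩ {x | ENNReal.ofReal l < k x}) :=
    measurableSet_Ioo.inter (measurableSet_lt measurable_const hk)
  have hvol : volume (Set.Ioo (0:ℝ) 1 ∩ {x | ENNReal.ofReal l < k x})
      = dd k (ENNReal.ofReal l) := by unfold dd; congr 1
  have h1 : ∫⁻ x in Set.Ioo (0:ℝ) 1 ∩ {x | ENNReal.ofReal l < k x}, gbar I f x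
      ≤ WW (gbar I f) (dd k (ENNReal.ofReal l)) := by
    have := setLIntegral_le_WW (u := gbar I f) (gbar_measurable f) hEm Set.inter_subset_left
    rwa [hvol] at this
  have h2 : WW (gbar I f) (dd k (ENNReal.ofReal l))
      = ∫⁻ s in Set.Ioo (0:ℝ) (ee k l), rearr (gbar I f) s := WW_eq (dd_le_one k _)
  have h3 : ∫⁻ s in Set.Ioo (0:ℝ) (ee k l), rearr (gbar I f) s
      ≤ ∫⁻ s in Set.Ioo (0:ℝ) (ee k l), gbar I f s := by
    apply lintegral_mono_ae
    rw [ae_restrict_iff' measurableSet_Ioo]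
    apply ae_of_all
    intro s hs
    exact rearr_gbar_le f ⟨hs.1, lt_of_lt_of_le hs.2 (ee_le_one l)⟩
  by_cases he : 0 < ee k l
  · have h4 : ∫⁻ s in Set.Ioo (0:ℝ) (ee k l), gbar I f s ≤ 9 * FF (GG I f) (ee k l) :=
      C1 f hqc he (ee_le_one l)
    have h5 : FF (GG I f) (ee k l) ≤ ∫⁻ x in Efam (GG I f) (ee k l), GG I f x :=
      intRearr_le_Efam (GG_measurable f hqc) he (ee_le_one l)
    have h6 : ∫⁻ x in Efam (GG I f) (ee k l), GG I f x
        ≤ ∫⁻ x in Eprime (GG I f) k l, GG I f x :=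
      lintegral_mono_set (Efam_subset_Eprime (GG_measurable f hqc))
    exact le_trans h1 (le_trans (le_of_eq h2) (le_trans h3 (le_trans h4
      (mul_le_mul' le_rfl (le_trans h5 h6)))))
  · have hempty : Set.Ioo (0:ℝ) (ee k l) = ∅ := Set.Ioo_eq_empty he
    refine le_trans h1 (le_trans (le_of_eq h2) (le_trans h3 ?_))
    rw [hempty]
    simp

end CHAIN


end S14

/-- Theorem 4.6 / `thm:ZOptimal`.  For quasiconcave `I` satisfying (★) and
an r.i. norm `‖·‖_X`, the associate optimal target norm `‖f‖_{Y_X'} = ‖R_I f^*‖_{X'}`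
satisfies `‖R_I f^*‖_{X'} ≈ ‖S_I (R_I f^*)‖_{X'}`, i.e. `S_I` is bounded on `Z` where
`‖g‖_Z = ‖S_I g‖_{X'}`. -/
theorem statement14 (I : ℝ → ℝ) (hqc : Quasiconcave I) (hstar : StarCond I)
    (ρ : (ℝ → ℝ≥0∞) → ℝ≥0∞) (hρ : IsRiNorm ρ) :
    ∃ c₁ c₂ : ℝ, 0 < c₁ ∧ 0 < c₂ ∧ ∀ f : ℝ → ℝ≥0∞, Measurable f →
      ENNReal.ofReal c₁ * assoc ρ (RI I (rearr f)) ≤ assoc ρ (SI I (RI I (rearr f))) ∧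
        assoc ρ (SI I (RI I (rearr f))) ≤ ENNReal.ofReal c₂ * assoc ρ (RI I (rearr f)) := by

  obtain ⟨hρ1, hρ2, hρ3, hρ4, hρ5, hρ6, hρ7, hρ8⟩ := hρ
  refine ⟨1, 9, one_pos, by norm_num, ?_⟩
  intro f hf
  have hGmeas : Measurable (S14.GG I f) := S14.GG_measurable f hqc
  have hcongr1 : ∀ t ∈ Set.Ioo (0:ℝ) 1, RI I (rearr f) t = S14.GG I f t := by
    intro t ht
    unfold RI S14.GG S14.FF
    rw [S14.Itil_eq hqc ht]
  have hrearr_eq : rearr (RI I (rearr f)) = rearr (S14.GG I f) := S14.rearr_congr hcongr1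
  have hSIeq : ∀ t ∈ Set.Ioo (0:ℝ) 1, SI I (RI I (rearr f)) t = S14.SIG I f t := by
    intro t ht
    unfold SI S14.SIG
    rw [S14.Itil_eq hqc ht, hrearr_eq]
    congr 1
    apply iSup_congr
    intro s
    apply iSup_congr
    intro hs
    rw [S14.Itil_eq hqc ⟨hs.1, lt_of_le_of_lt hs.2 ht.2⟩]
  have hassoc_congr : ∀ u v : ℝ → ℝ≥0∞, (∀ t ∈ Set.Ioo (0:ℝ) 1, u t = v t) →
      assoc ρ u = assoc ρ v := by
    intro u v h
    unfold assoc
    apply iSup_congr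
    intro g
    apply iSup_congr
    intro hg
    apply setLIntegral_congr_fun measurableSet_Ioo
    exact (fun t ht => by rw [h t ht])
  have e1 : assoc ρ (RI I (rearr f)) = assoc ρ (S14.GG I f) := hassoc_congr _ _ hcongr1
  have e2 : assoc ρ (SI I (RI I (rearr f))) = assoc ρ (S14.SIG I f) := hassoc_congr _ _ hSIeq
  constructor
  · -- lower bound with c₁ = 1
    rw [e1, e2, ENNReal.ofReal_one, one_mul]
    unfold assoc
    apply iSup_le
    intro k
    apply iSup_le
    rintro ⟨hkm, hk1⟩
    have hHL := S14.HL hGmeas hkm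
    have hmono : ∫⁻ x in Set.Ioo (0:ℝ) 1, rearr (S14.GG I f) x * rearr k x
        ≤ ∫⁻ x in Set.Ioo (0:ℝ) 1, S14.SIG I f x * rearr k x := by
      apply lintegral_mono_ae
      rw [ae_restrict_iff' measurableSet_Ioo]
      exact ae_of_all _ (fun x hx => mul_le_mul' (S14.P2 f hqc hx) le_rfl)
    refine le_trans hHL (le_trans hmono ?_)
    have hadm : Measurable (rearr k) ∧ ρ (rearr k) ≤ 1 :=
      ⟨S14.rearr_measurable k, by rw [← hρ8 k hkm]; exact hk1⟩
    exact le_iSup_of_le (rearr k) (le_iSup_of_le hadm le_rfl)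
  · -- upper bound with c₂ = 9
    rw [e1, e2]
    have h9 : ENNReal.ofReal (9:ℝ) = (9:ℝ≥0∞) := by norm_num
    rw [h9]
    unfold assoc
    apply iSup_le
    intro k
    apply iSup_le
    rintro ⟨hkm, hk1⟩
    -- step A : SIG ≤ gbar
    have hA : ∫⁻ t in Set.Ioo (0:ℝ) 1, S14.SIG I f t * k t
        ≤ ∫⁻ t in Set.Ioo (0:ℝ) 1, S14.gbar I f t * k t := by
      apply lintegral_mono_ae
      rw [ae_restrict_iff' measurableSet_Ioo]
      exact ae_of_all _ (fun t ht => mul_le_mul' (S14.P1 f hqc ht) le_rfl)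
    -- step B : layer cake
    have hB := S14.layercake (u := S14.gbar I f) (S14.gbar_measurable f) hkm
      (measurableSet_Ioo (a := (0:ℝ)) (b := (1:ℝ)))
    -- step C : per-level estimate
    have hC : ∫⁻ l in Set.Ioi (0:ℝ),
        ∫⁻ x in Set.Ioo (0:ℝ) 1 ∩ {x | ENNReal.ofReal l < k x}, S14.gbar I f x
        ≤ ∫⁻ l in Set.Ioi (0:ℝ), 9 * ∫⁻ x in S14.Eprime (S14.GG I f) k l, S14.GG I f x := by
      apply lintegral_mono_ae
      rw [ae_restrict_iff' measurableSet_Ioi]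
      exact ae_of_all _ (fun l hl => S14.level_chain f k hqc hkm hl)
    -- step D+E : constants out, Tonelli
    have hD : ∫⁻ l in Set.Ioi (0:ℝ), 9 * ∫⁻ x in S14.Eprime (S14.GG I f) k l, S14.GG I f x
        = 9 * ∫⁻ t in Set.Ioo (0:ℝ) 1, S14.GG I f t * S14.Psi (S14.GG I f) k t := by
      rw [lintegral_const_mul' _ _ (by norm_num : (9:ℝ≥0∞) ≠ ⊤), S14.psi_tonelli hGmeas]
    -- step F : Psi is admissible
    have hPsiM : Measurable (S14.Psi (S14.GG I f) k) := S14.Psi_measurable hGmeas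
    have hPsiAdm : ρ (S14.Psi (S14.GG I f) k) ≤ 1 := by
      have hr1 : ρ (S14.Psi (S14.GG I f) k) = ρ (rearr (S14.Psi (S14.GG I f) k)) :=
        hρ8 _ hPsiM
      have hr2 : ρ (rearr (S14.Psi (S14.GG I f) k)) ≤ ρ (rearr k) := by
        apply hρ4 _ _ (S14.rearr_measurable _) (S14.rearr_measurable k)
        exact ae_of_all _ (fun t => S14.rearr_mono_dd (S14.dd_Psi_le hGmeas) t)
      have hr3 : ρ (rearr k) = ρ k := (hρ8 k hkm).symm
      rw [hr1]
      exact le_trans hr2 (le_trans (le_of_eq hr3) hk1)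
    -- step G : conclude
    have hG2 : ∫⁻ t in Set.Ioo (0:ℝ) 1, S14.GG I f t * S14.Psi (S14.GG I f) k t
        ≤ ⨆ (g : ℝ → ℝ≥0∞) (_ : Measurable g ∧ ρ g ≤ 1),
            ∫⁻ t in Set.Ioo (0:ℝ) 1, S14.GG I f t * g t :=
      le_iSup_of_le (S14.Psi (S14.GG I f) k) (le_iSup_of_le ⟨hPsiM, hPsiAdm⟩ le_rfl)
    calc ∫⁻ t in Set.Ioo (0:ℝ) 1, S14.SIG I f t * k t
        ≤ ∫⁻ t in Set.Ioo (0:ℝ) 1, S14.gbar I f t * k t := hA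
    _ = ∫⁻ l in Set.Ioi (0:ℝ),
          ∫⁻ x in Set.Ioo (0:ℝ) 1 ∩ {x | ENNReal.ofReal l < k x}, S14.gbar I f x := hB
    _ ≤ ∫⁻ l in Set.Ioi (0:ℝ), 9 * ∫⁻ x in S14.Eprime (S14.GG I f) k l, S14.GG I f x := hC
    _ = 9 * ∫⁻ t in Set.Ioo (0:ℝ) 1, S14.GG I f t * S14.Psi (S14.GG I f) k t := hD
    _ ≤ 9 * ⨆ (g : ℝ → ℝ≥0∞) (_ : Measurable g ∧ ρ g ≤ 1),
          ∫⁻ t in Set.Ioo (0:ℝ) 1, S14.GG I f t * g t := mul_le_mul' le_rfl hG2
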